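/- arXiv:1402.2102 — 5 statements merged into one kernel-verified Lean document; each statement's English description precedes it below -/
import Mathlib

section
/- Let R be a balanced difference bounds constraint over N variables, n ≥ 1 and 0 ≤ p ≤ q ≤ n integers, ρ an extremal path in G_R^n, and ξ ∈ segments(ρ,p,q) a segment with lbcorners(ξ) ≠ ∅. Then the first lb-corner of ξ is a right corner if and only if ξ starts at position p, and is a left corner if and only if ξ starts at position q. -/
/- ## Difference bounds constraints and their relations -/

/-- Valuations of `N` integer variables. -/
abbrev Val (N : ℕ) := Fin N → ℤ

/-- An atomic proposition `u - v ≤ c` where `u, v` range over the unprimed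
(`Sum.inl`) and primed (`Sum.inr`) variables. -/
abbrev Atom (N : ℕ) := (Fin N ⊕ Fin N) × (Fin N ⊕ Fin N) × ℤ

/-- A vertex of an unfolded constraint graph: a position together with a variable. -/
abbrev Vtx (N : ℕ) := ℤ × Fin N

/-- A difference bounds constraint: a finite conjunction of atomic propositions. -/
structure DBC (N : ℕ) where
  atoms : Finset (Atom N)

/-- A path in an unfolded constraint graph: a first vertex followed by a list of
steps, each carrying a weight and a target vertex. -/
structure UPath (N : ℕ) where
  first : Vtx N
  steps : List (ℤ × Vtx N)

variable {N : ℕ}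

def interp (ν ν' : Val N) : Fin N ⊕ Fin N → ℤ
  | Sum.inl i => ν i
  | Sum.inr i => ν' i

/-- The relation on valuations defined by a difference bounds constraint. -/
def DBC.rel (R : DBC N) (ν ν' : Val N) : Prop :=
  ∀ a ∈ R.atoms, interp ν ν' a.1 - interp ν ν' a.2.1 ≤ a.2.2

/-- Relational composition. -/
def relComp (P Q : Val N → Val N → Prop) (ν ν' : Val N) : Prop :=
  ∃ μ, P ν μ ∧ Q μ ν'

/-- `n`-fold relational composition, with `relPow P 0` the identity relation. -/
def relPow (P : Val N → Val N → Prop) : ℕ → Val N → Val N → Prop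
  | 0 => Eq
  | n + 1 => relComp P (relPow P n)

/-- A DB constraint is balanced when `x i - x j ≤ c` is a conjunct iff
`x' i - x' j ≤ c` is a conjunct. -/
def DBC.Balanced (R : DBC N) : Prop :=
  ∀ (i j : Fin N) (c : ℤ),
    (Sum.inl i, Sum.inl j, c) ∈ R.atoms ↔ (Sum.inr i, Sum.inr j, c) ∈ R.atoms

/-- Forward one-directional: every atom is of the form `x i - x' j ≤ c`. -/
def DBC.IsFw (R : DBC N) : Prop :=
  ∀ a ∈ R.atoms, ∃ (i j : Fin N) (c : ℤ), a = (Sum.inl i, Sum.inr j, c)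

/-- Backward one-directional: every atom is of the form `x' i - x j ≤ c`. -/
def DBC.IsBw (R : DBC N) : Prop :=
  ∀ a ∈ R.atoms, ∃ (i j : Fin N) (c : ℤ), a = (Sum.inr i, Sum.inl j, c)

def DBC.IsOneDirectional (R : DBC N) : Prop := R.IsFw ∨ R.IsBw

/- ## Unfolded constraint graphs -/

/-- The endpoint of an atom placed at copy `p` of the unfolding: unprimed
variables live at position `p`, primed ones at position `p + 1`. -/
def endpt (p : ℤ) : Fin N ⊕ Fin N → Vtx N
  | Sum.inl i => (p, i)
  | Sum.inr i => (p + 1, i)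

/-- Edge of the unfolding contributed by copy `p` of the constraint graph. -/
def DBC.EdgeAt (R : DBC N) (p : ℤ) (u v : Vtx N) (c : ℤ) : Prop :=
  ∃ s t, (s, t, c) ∈ R.atoms ∧ u = endpt p s ∧ v = endpt p t

/-- Edge of the bi-infinite unfolding. -/
def DBC.Edge (R : DBC N) (u v : Vtx N) (c : ℤ) : Prop :=
  ∃ p : ℤ, R.EdgeAt p u v c

/-- Edge of the `n`-times unfolding `G_R^n` (copies `0, …, n-1`). -/
def DBC.EdgeN (R : DBC N) (n : ℕ) (u v : Vtx N) (c : ℤ) : Prop :=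
  ∃ p : ℤ, 0 ≤ p ∧ p < (n : ℤ) ∧ R.EdgeAt p u v c

namespace UPath

/-- The list of vertices traversed by a path. -/
def vertices (ρ : UPath N) : List (Vtx N) := ρ.first :: ρ.steps.map Prod.snd

/-- The last vertex of a path. -/
def last (ρ : UPath N) : Vtx N := (ρ.steps.map Prod.snd).getLastD ρ.first

/-- The weight of a path: the sum of its edge weights. -/
def weight (ρ : UPath N) : ℤ := (ρ.steps.map Prod.fst).sum

def posList (ρ : UPath N) : List ℤ := ρ.vertices.map Prod.fst

/-- The set of positions of the vertices of a path. -/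
def posFinset (ρ : UPath N) : Finset ℤ := ρ.posList.toFinset

theorem posFinset_nonempty (ρ : UPath N) : ρ.posFinset.Nonempty := by
  refine ⟨ρ.first.1, ?_⟩
  simp [posFinset, posList, vertices]

/-- The extent of a path: the difference between its maximal and minimal
position. -/
def extent (ρ : UPath N) : ℤ :=
  ρ.posFinset.max' ρ.posFinset_nonempty - ρ.posFinset.min' ρ.posFinset_nonempty

/-- The list of variables traversed by a path. -/
def varList (ρ : UPath N) : List (Fin N) := ρ.vertices.map Prod.snd

/-- The steps form a chain of edges w.r.t. the edge relation `E`. -/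
def EdgeChain (E : Vtx N → Vtx N → ℤ → Prop) : Vtx N → List (ℤ × Vtx N) → Prop
  | _, [] => True
  | u, s :: rest => E u s.2 s.1 ∧ EdgeChain E s.2 rest

/-- The path lies in the bi-infinite unfolding of the constraint graph of `R`. -/
def InUnf (R : DBC N) (ρ : UPath N) : Prop := EdgeChain R.Edge ρ.first ρ.steps

/-- The path lies in the `n`-times unfolding `G_R^n`. -/
def InUnfN (R : DBC N) (n : ℕ) (ρ : UPath N) : Prop :=
  EdgeChain (R.EdgeN n) ρ.first ρ.steps

/-- Concatenation (the caller must ensure `π.first = ρ.last` for this to be a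
genuine path concatenation). -/
def append (ρ π : UPath N) : UPath N := ⟨ρ.first, ρ.steps ++ π.steps⟩

/-- Shift a path by `k` positions. -/
def shift (k : ℤ) (ρ : UPath N) : UPath N :=
  ⟨(ρ.first.1 + k, ρ.first.2), ρ.steps.map fun s => (s.1, (s.2.1 + k, s.2.2))⟩

/-- Concatenation with implicit shifting: `π` is shifted so that its first
vertex is at the position of the last vertex of `ρ`. -/
def glue (ρ π : UPath N) : UPath N := ρ.append (shift (ρ.last.1 - π.first.1) π)

/-- `k`-fold concatenation of a (repeating) path with itself, each copy shifted
so that its first vertex coincides with the last vertex of the previous copy. -/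
def pow (μ : UPath N) : ℕ → UPath N
  | 0 => ⟨μ.first, []⟩
  | k + 1 => (pow μ k).glue μ

def IsVertical (ρ : UPath N) : Prop := ρ.last.1 = ρ.first.1

def IsForward (ρ : UPath N) : Prop := ρ.first.1 < ρ.last.1

def IsBackward (ρ : UPath N) : Prop := ρ.last.1 < ρ.first.1

/-- A path is repeating if its endpoints are copies of the same variable at
different positions. -/
def IsRepeating (ρ : UPath N) : Prop := ρ.first.1 ≠ ρ.last.1 ∧ ρ.first.2 = ρ.last.2

/-- Relative length: the absolute difference of the first and last positions. -/
def relLen (ρ : UPath N) : ℤ := |ρ.last.1 - ρ.first.1|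

/-- Right corner of some extent `d`: a nonempty vertical path whose positions
are exactly `{k, …, k+d}` where `k` is its first (= last) position. -/
def IsRightCorner (ρ : UPath N) : Prop :=
  ρ.steps ≠ [] ∧ ρ.last.1 = ρ.first.1 ∧
  ∃ d : ℕ, ρ.posFinset = Finset.Icc ρ.first.1 (ρ.first.1 + (d : ℤ))

/-- Left corner of some extent `d`: positions exactly `{k−d, …, k}`. -/
def IsLeftCorner (ρ : UPath N) : Prop :=
  ρ.steps ≠ [] ∧ ρ.last.1 = ρ.first.1 ∧
  ∃ d : ℕ, ρ.posFinset = Finset.Icc (ρ.first.1 - (d : ℤ)) ρ.first.1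

def IsCorner (ρ : UPath N) : Prop := ρ.IsRightCorner ∨ ρ.IsLeftCorner

/-- A corner is basic if its start/end position does not occur among the
positions of its intermediate vertices. -/
def IsBasic (ρ : UPath N) : Prop :=
  ∀ s ∈ ρ.steps.dropLast, s.2.1 ≠ ρ.first.1

/-- A long corner: a corner of extent exceeding `N²`. -/
def IsLongCorner (ρ : UPath N) : Prop := ρ.IsCorner ∧ (N : ℤ) ^ 2 < ρ.extent

/-- An lb-corner: a corner that is both long and basic. -/
def IsLBCorner (ρ : UPath N) : Prop := ρ.IsLongCorner ∧ ρ.IsBasic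

/-- `θ` is a (contiguous) subpath of `ρ`. -/
def IsSubpath (θ ρ : UPath N) : Prop :=
  ∃ pre post, ρ.steps = pre ++ θ.steps ++ post ∧ θ.first = (UPath.mk ρ.first pre).last

/-- A path is essential if its traversed variables are pairwise distinct,
except that the first and the last variable may coincide. -/
def IsEssential (ρ : UPath N) : Prop :=
  ∀ (a b : ℕ) (ha : a < ρ.varList.length) (hb : b < ρ.varList.length),
    a < b → ρ.varList.get ⟨a, ha⟩ = ρ.varList.get ⟨b, hb⟩ →
      a = 0 ∧ b = ρ.varList.length - 1

/-- An extremal path of `G_R^n`: both endpoints are at position `0` or `n`. -/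
def IsExtremalIn (n : ℕ) (ρ : UPath N) : Prop :=
  (ρ.first.1 = 0 ∨ ρ.first.1 = (n : ℤ)) ∧ (ρ.last.1 = 0 ∨ ρ.last.1 = (n : ℤ))

/-- `ρ'` is compatible with `ρ`: same first vertex, same last vertex and weight
not greater than that of `ρ`. -/
def Compatible (ρ' ρ : UPath N) : Prop :=
  ρ'.first = ρ.first ∧ ρ'.last = ρ.last ∧ ρ'.weight ≤ ρ.weight

/-- A path in `G_R^n` is normalized if none of its subpaths traversing only
positions in `{N², …, n−N²}` is a long corner. -/
def IsNormalized (n : ℕ) (ρ : UPath N) : Prop :=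
  ∀ θ : UPath N, θ.IsSubpath ρ →
    θ.posFinset ⊆ Finset.Icc ((N : ℤ) ^ 2) ((n : ℤ) - (N : ℤ) ^ 2) →
    ¬ θ.IsLongCorner

end UPath

/- ## UPath schemes -/

/-- `σ.λ*.σ'` is a path scheme: `λ` is empty or an essential repeating path,
the variables match up for concatenation, and `σ.λ.σ'` is a non-empty path. -/
def IsSchemeTriple (σ lam σ' : UPath N) : Prop :=
  (lam.steps = [] ∨ (lam.IsEssential ∧ lam.IsRepeating)) ∧
  lam.first.2 = σ.last.2 ∧ σ'.first.2 = lam.last.2 ∧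
  (σ.glue (lam.glue σ')).steps ≠ []

/-- The element `σ.λ^m.σ'` of the set of paths denoted by the scheme `σ.λ*.σ'`. -/
def schemeElem (σ lam σ' : UPath N) (m : ℕ) : UPath N :=
  σ.glue ((lam.pow m).glue σ')

/-- Shape of the `λ` component of a scheme of the class `Π_{ijkpq}`:
a path `x_k^(0) → … → x_k^(p)` of length `p` in the unfolding. -/
def LamShape (R : DBC N) (k : Fin N) (p : ℕ) (lam : UPath N) : Prop :=
  lam.InUnf R ∧ lam.first = ((0 : ℤ), k) ∧ lam.last = ((p : ℤ), k) ∧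
  lam.steps.length = p

/-- Shape of the `σ, σ'` components of a scheme of the class `Π_{ijkpq}`:
`σ : x_i^(0) → … → x_k^(r)` and `σ' : x_k^(r) → … → x_j^(q)` for some
`0 ≤ r ≤ q`, with `|σ.σ'| = q`. -/
def SigmaShape (R : DBC N) (i j k : Fin N) (q : ℕ) (σ σ' : UPath N) : Prop :=
  ∃ r : ℕ, r ≤ q ∧ σ.InUnf R ∧ σ'.InUnf R ∧
    σ.first = ((0 : ℤ), i) ∧ σ.last = ((r : ℤ), k) ∧
    σ'.first = ((r : ℤ), k) ∧ σ'.last = ((q : ℤ), j) ∧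
    σ.steps.length + σ'.steps.length = q

/-- Membership of the scheme `σ.λ*.σ'` in the class `Π_{ijkpq}`. -/
def InPi (R : DBC N) (i j k : Fin N) (p q : ℕ) (σ lam σ' : UPath N) : Prop :=
  IsSchemeTriple σ lam σ' ∧ LamShape R k p lam ∧ SigmaShape R i j k q σ σ'

/-- The set `S_ij` of quadruples `(|σ.σ'|, |λ|, w(σ.σ'), w(λ))` arising from the
minimal representative schemes `θ_{ijkpq}` of the nonempty classes `Π_{ijkpq}`. -/
def Sset (R : DBC N) (i j : Fin N) : Set (ℕ × ℕ × ℤ × ℤ) :=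
  { t | ∃ (k : Fin N) (p q : ℕ) (σ lam σ' : UPath N),
      p ≤ N ∧ q ≤ N ^ 4 ∧ 0 < p + q ∧
      (∃ ν μ ν' : UPath N, InPi R i j k p q ν μ ν') ∧
      LamShape R k p lam ∧
      (∀ lam', LamShape R k p lam' → lam.weight ≤ lam'.weight) ∧
      SigmaShape R i j k q σ σ' ∧
      (∀ σ₁ σ₁', SigmaShape R i j k q σ₁ σ₁' →
        σ.weight + σ'.weight ≤ σ₁.weight + σ₁'.weight) ∧
      t = (q, p, σ.weight + σ'.weight, lam.weight) }

/- ## Segments -/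

/-- An edge from `u` to `v` has both endpoints at positions within `{p, …, q}`. -/
def StepInRange (p q : ℤ) (u v : Vtx N) : Prop :=
  p ≤ u.1 ∧ u.1 ≤ q ∧ p ≤ v.1 ∧ v.1 ≤ q

/-- `ξ` is an element of `segments(ρ, p, q)`: a nonempty maximal subpath of `ρ`
whose positions lie within `{p, …, q}`, immediately preceded and followed (if at
all) by edges not lying within `{p, …, q}`. -/
def IsSegmentOf (ρ : UPath N) (p q : ℤ) (ξ : UPath N) : Prop :=
  ξ.steps ≠ [] ∧
  ∃ pre post, ρ.steps = pre ++ ξ.steps ++ post ∧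
    ξ.first = (UPath.mk ρ.first pre).last ∧
    ξ.posFinset ⊆ Finset.Icc p q ∧
    (∀ pre' c u, pre = pre' ++ [(c, u)] →
      ¬ StepInRange p q (UPath.mk ρ.first pre').last u) ∧
    (∀ c v post', post = (c, v) :: post' → ¬ StepInRange p q ξ.last v)

/- ## The strengthened relation and one-directional approximations -/

/-- `S_fw`: the valuations `ν` such that `∃ ν'. (ν,ν') ∈ R^{N²}`. -/
def Sfw (R : DBC N) (ν : Val N) : Prop := ∃ ν', relPow R.rel (N ^ 2) ν ν'

/-- `S_bw`: the valuations `ν'` such that `∃ ν. (ν,ν') ∈ R^{N²}`. -/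
def Sbw (R : DBC N) (ν' : Val N) : Prop := ∃ ν, relPow R.rel (N ^ 2) ν ν'

/-- The strengthened relation `R_s = R ∧ S_fw(x) ∧ S_bw(x')`. -/
def Rs (R : DBC N) (ν ν' : Val N) : Prop := R.rel ν ν' ∧ Sfw R ν ∧ Sbw R ν'

/-- `R_fw`: the strongest forward one-directional DB relation implied by `R_s`. -/
def Rfw (R : DBC N) (ν ν' : Val N) : Prop :=
  ∀ (i j : Fin N) (c : ℤ), (∀ μ μ', Rs R μ μ' → μ i - μ' j ≤ c) → ν i - ν' j ≤ c

/-- `R_bw`: the strongest backward one-directional DB relation implied by `R_s`. -/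
def Rbw (R : DBC N) (ν ν' : Val N) : Prop :=
  ∀ (i j : Fin N) (c : ℤ), (∀ μ μ', Rs R μ μ' → μ' i - μ j ≤ c) → ν' i - ν j ≤ c

/- ## Corner decompositions -/

/-- The pumped path `η.μ^k.τ.μ'^k.η'`. -/
def pumped (η μ τ μ' η' : UPath N) (k : ℕ) : UPath N :=
  η.glue ((μ.pow k).glue (τ.glue ((μ'.pow k).glue η')))

/-- The decomposition `ρ' = η.μ.τ.μ'.η'` of a right corner as in the corner
shortening / decomposition lemma. -/
def DecompRight (ρ' : UPath N) : Prop :=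
  ∃ η μ τ μ' η' : UPath N,
    ρ' = η.append (μ.append (τ.append (μ'.append η'))) ∧
    μ.first = η.last ∧ τ.first = μ.last ∧ μ'.first = τ.last ∧ η'.first = μ'.last ∧
    μ.IsForward ∧ μ.IsRepeating ∧ μ'.IsBackward ∧ μ'.IsRepeating ∧
    τ.IsRightCorner ∧
    η.relLen = η'.relLen ∧
    1 ≤ μ.relLen ∧ μ.relLen = μ'.relLen ∧ μ.relLen ≤ (N : ℤ) ^ 2 ∧
    μ.weight + μ'.weight < 0 ∧
    ∀ k : ℕ,
      (pumped η μ τ μ' η' k).IsRightCorner ∧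
      (∀ θ : UPath N, θ.IsSubpath (η.glue (μ.pow k)) → ¬ θ.IsLBCorner) ∧
      (∀ θ : UPath N, θ.IsSubpath ((μ'.pow k).glue η') → ¬ θ.IsLBCorner)

/-- The decomposition `ρ' = η.μ.τ.μ'.η'` of a left corner as in the corner
shortening / decomposition lemma. -/
def DecompLeft (ρ' : UPath N) : Prop :=
  ∃ η μ τ μ' η' : UPath N,
    ρ' = η.append (μ.append (τ.append (μ'.append η'))) ∧
    μ.first = η.last ∧ τ.first = μ.last ∧ μ'.first = τ.last ∧ η'.first = μ'.last ∧
    μ.IsBackward ∧ μ.IsRepeating ∧ μ'.IsForward ∧ μ'.IsRepeating ∧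
    τ.IsLeftCorner ∧
    η.relLen = η'.relLen ∧
    1 ≤ μ.relLen ∧ μ.relLen = μ'.relLen ∧ μ.relLen ≤ (N : ℤ) ^ 2 ∧
    μ.weight + μ'.weight < 0 ∧
    ∀ k : ℕ,
      (pumped η μ τ μ' η' k).IsLeftCorner ∧
      (∀ θ : UPath N, θ.IsSubpath (η.glue (μ.pow k)) → ¬ θ.IsLBCorner) ∧
      (∀ θ : UPath N, θ.IsSubpath ((μ'.pow k).glue η') → ¬ θ.IsLBCorner)

/- ## Balanced closure -/

/-- Swap an unprimed-unprimed atom with its primed-primed counterpart. -/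
def flipAtom : Atom N → Atom N
  | (Sum.inl i, Sum.inl j, c) => (Sum.inr i, Sum.inr j, c)
  | (Sum.inr i, Sum.inr j, c) => (Sum.inl i, Sum.inl j, c)
  | a => a

/-- The balanced closure `R_b` of a DB constraint `R`. -/
def DBC.balClosure (R : DBC N) : DBC N := ⟨R.atoms ∪ R.atoms.image flipAtom⟩


/- ## Auxiliary infrastructure for Statement 7 -/

namespace Seg7

open UPath

variable {N : ℕ}

/-- Adjacent entries differ by at most 1. -/
def Adj1 (L : List ℤ) : Prop := L.Chain' fun a b => |a - b| ≤ 1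

lemma Adj1.infix {L L' : List ℤ} (h : Adj1 L) (h' : L' <:+: L) : Adj1 L' :=
  List.IsChain.infix h h'

/-- Discrete intermediate value property. -/
lemma ivt {m : ℤ} : ∀ (L : List ℤ), Adj1 L → ∀ x ∈ L, ∀ y ∈ L, x ≤ m → m ≤ y → m ∈ L := by
  intro L
  induction L with
  | nil => simp
  | cons a L ih =>
    intro hc x hx y hy hxm hmy
    have hc' : Adj1 L := hc.tail
    by_cases hm : m = a
    · exact hm ▸ List.mem_cons_self
    rcases List.mem_cons.1 hx with hxa | hxL <;> rcases List.mem_cons.1 hy with hya | hyL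
    · exact absurd (by omega : m = a) hm
    · cases L with
      | nil => simp at hyL
      | cons b L' =>
        have hab : |a - b| ≤ 1 := (List.isChain_cons_cons.1 hc).1
        have hb : b ≤ m := by rw [abs_le] at hab; omega
        exact List.mem_cons_of_mem _ (ih hc' b (List.mem_cons_self) y hyL hb hmy)
    · cases L with
      | nil => simp at hxL
      | cons b L' =>
        have hab : |a - b| ≤ 1 := (List.isChain_cons_cons.1 hc).1
        have hb : m ≤ b := by rw [abs_le] at hab; omega
        exact List.mem_cons_of_mem _ (ih hc' x hxL b (List.mem_cons_self) hxm hb)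
    · exact List.mem_cons_of_mem _ (ih hc' x hxL y hyL hxm hmy)

lemma exists_getLast_split {α : Type*} (P : α → Prop) :
    ∀ (L : List α), (∃ x ∈ L, P x) →
      ∃ l₁ w l₂, L = l₁ ++ w :: l₂ ∧ P w ∧ ∀ x ∈ l₂, ¬ P x := by
  intro L
  induction L with
  | nil => simp
  | cons a L ih =>
    intro h
    by_cases h' : ∃ x ∈ L, P x
    · obtain ⟨l₁, w, l₂, hL, hw, hl₂⟩ := ih h'
      exact ⟨a :: l₁, w, l₂, by rw [hL]; rfl, hw, hl₂⟩
    · obtain ⟨x, hx, hPx⟩ := h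
      have hxa : x = a := by
        rcases List.mem_cons.1 hx with rfl | hx
        · rfl
        · exact absurd ⟨x, hx, hPx⟩ h'
      exact ⟨[], a, L, rfl, hxa ▸ hPx, fun y hy hPy => h' ⟨y, hy, hPy⟩⟩

lemma exists_head_split {α : Type*} (P : α → Prop) :
    ∀ (L : List α), (∃ x ∈ L, P x) →
      ∃ l₁ w l₂, L = l₁ ++ w :: l₂ ∧ P w ∧ ∀ x ∈ l₁, ¬ P x := by
  intro L
  induction L with
  | nil => simp
  | cons a L ih =>
    intro h
    by_cases hPa : P a
    · exact ⟨[], a, L, rfl, hPa, by simp⟩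
    · obtain ⟨x, hx, hPx⟩ := h
      have hx' : x ∈ L := by
        rcases List.mem_cons.1 hx with rfl | h2
        · exact absurd hPx hPa
        · exact h2
      obtain ⟨l₁, w, l₂, hL, hw, hl₁⟩ := ih ⟨x, hx', hPx⟩
      refine ⟨a :: l₁, w, l₂, by rw [hL]; rfl, hw, ?_⟩
      intro y hy
      rcases List.mem_cons.1 hy with rfl | hy
      · exact hPa
      · exact hl₁ y hy

lemma getLast_cons_eq_getLastD {α : Type*} (l : List α) (a : α) (h : a :: l ≠ []) :
    (a :: l).getLast h = l.getLastD a := by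
  cases l with
  | nil => rfl
  | cons b t =>
    rw [List.getLast_cons (List.cons_ne_nil b t)]
    rw [List.getLastD_eq_getLast?, List.getLast?_eq_getLast (List.cons_ne_nil b t)]
    rfl

lemma getLastD_map {α β : Type*} (f : α → β) (l : List α) (a : α) :
    (l.map f).getLastD (f a) = f (l.getLastD a) := by
  rw [List.getLastD_eq_getLast?, List.getLastD_eq_getLast?, List.getLast?_map]
  cases l.getLast? <;> rfl

lemma getLastD_eq_of_ne_nil {α : Type*} (l : List α) (h : l ≠ []) (a b : α) :
    l.getLastD a = l.getLastD b := by
  obtain ⟨x, hx⟩ := Option.isSome_iff_exists.1 (List.getLast?_isSome.2 h)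
  rw [List.getLastD_eq_getLast?, List.getLastD_eq_getLast?, hx]
  rfl

lemma getLastD_append {α : Type*} (l₁ l₂ : List α) (a : α) (h : l₂ ≠ []) :
    (l₁ ++ l₂).getLastD a = l₂.getLastD a := by
  obtain ⟨x, hx⟩ := Option.isSome_iff_exists.1 (List.getLast?_isSome.2 h)
  rw [List.getLastD_eq_getLast?, List.getLastD_eq_getLast?, List.getLast?_append, hx]
  rfl

lemma cons_eq_dropLast_append {α : Type*} (l : List α) (a : α) :
    a :: l = (a :: l).dropLast ++ [l.getLastD a] := by
  rw [← getLast_cons_eq_getLastD l a (by simp), List.dropLast_append_getLast]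

lemma posList_eq (ρ : UPath N) :
    ρ.posList = ρ.first.1 :: ρ.steps.map (fun s => s.2.1) := by
  show List.map Prod.fst (ρ.first :: ρ.steps.map Prod.snd) = _
  rw [List.map_cons, List.map_map]
  rfl

lemma last_eq (ρ : UPath N) : ρ.last = (ρ.steps.map Prod.snd).getLastD ρ.first := rfl

lemma first_mem_posList (ρ : UPath N) : ρ.first.1 ∈ ρ.posList := by
  rw [posList_eq]; exact List.mem_cons_self

lemma last_mem_vertices (ρ : UPath N) : ρ.last ∈ ρ.vertices :=
  List.getLastD_mem_cons

lemma mem_posList_of_mem_vertices {ρ : UPath N} {v : Vtx N} (h : v ∈ ρ.vertices) :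
    v.1 ∈ ρ.posList := List.mem_map_of_mem h

lemma mem_posFinset_iff {ρ : UPath N} {x : ℤ} : x ∈ ρ.posFinset ↔ x ∈ ρ.posList :=
  List.mem_toFinset

/-- Vertices of a subpath form an infix of the vertices. -/
lemma vertices_infix (ρ θ : UPath N) (pre post : List (ℤ × Vtx N))
    (hsteps : ρ.steps = pre ++ θ.steps ++ post)
    (hfirst : θ.first = (UPath.mk ρ.first pre).last) :
    θ.vertices <:+: ρ.vertices := by
  refine ⟨(ρ.first :: pre.map Prod.snd).dropLast, post.map Prod.snd, ?_⟩
  have key : (ρ.first :: pre.map Prod.snd).dropLast ++ [θ.first]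
      = ρ.first :: pre.map Prod.snd := by
    rw [hfirst]
    exact (cons_eq_dropLast_append _ _).symm
  calc (ρ.first :: pre.map Prod.snd).dropLast ++ θ.vertices ++ post.map Prod.snd
      = ((ρ.first :: pre.map Prod.snd).dropLast ++ [θ.first])
          ++ (θ.steps.map Prod.snd ++ post.map Prod.snd) := by
        simp [UPath.vertices]
    _ = ρ.vertices := by
        rw [key]
        simp [UPath.vertices, hsteps]

lemma posList_infix {ρ θ : UPath N} (h : θ.vertices <:+: ρ.vertices) :
    θ.posList <:+: ρ.posList := List.IsInfix.map Prod.fst h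

lemma edgeN_pos {R : DBC N} {n : ℕ} {u v : Vtx N} {c : ℤ} (h : R.EdgeN n u v c) :
    |u.1 - v.1| ≤ 1 := by
  obtain ⟨r, _, _, s, t, _, hu, hv⟩ := h
  have hu1 : u.1 = r ∨ u.1 = r + 1 := by cases s <;> subst hu <;> simp [endpt]
  have hv1 : v.1 = r ∨ v.1 = r + 1 := by cases t <;> subst hv <;> simp [endpt]
  rw [abs_le]; omega

lemma adj1_of_chain (E : Vtx N → Vtx N → ℤ → Prop)
    (hE : ∀ u v c, E u v c → |u.1 - v.1| ≤ 1) :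
    ∀ (l : List (ℤ × Vtx N)) (u : Vtx N), UPath.EdgeChain E u l →
      Adj1 (List.map Prod.fst (u :: l.map Prod.snd)) := by
  intro l
  induction l with
  | nil => intro u _; exact List.isChain_singleton _
  | cons s rest ih =>
    intro u h
    obtain ⟨h1, h2⟩ := h
    simp only [List.map_cons]
    exact List.isChain_cons_cons.2 ⟨hE _ _ _ h1, ih s.2 h2⟩

lemma adj1_posList {R : DBC N} {n : ℕ} {ρ : UPath N} (h : ρ.InUnfN R n) :
    Adj1 ρ.posList :=
  adj1_of_chain _ (fun _ _ _ he => edgeN_pos he) _ _ h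

/- ### Negation of paths -/

def negV (v : Vtx N) : Vtx N := (-v.1, v.2)

def negS (s : ℤ × Vtx N) : ℤ × Vtx N := (s.1, negV s.2)

def negP (ρ : UPath N) : UPath N := ⟨negV ρ.first, ρ.steps.map negS⟩

lemma negP_negP (ρ : UPath N) : negP (negP ρ) = ρ := by
  cases ρ with
  | mk f s =>
    simp only [negP, negV, negS, List.map_map]
    refine congrArg₂ UPath.mk (by simp) ?_
    conv_rhs => rw [← List.map_id s]
    refine List.map_congr_left ?_
    intro x _
    simp [negS, negV]

lemma negP_last (ρ : UPath N) : (negP ρ).last = negV ρ.last := by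
  show ((ρ.steps.map negS).map Prod.snd).getLastD (negV ρ.first) = _
  rw [List.map_map]
  have h : ρ.steps.map (Prod.snd ∘ negS) = (ρ.steps.map Prod.snd).map negV := by
    rw [List.map_map]; rfl
  rw [h, getLastD_map]
  rfl

lemma negP_append (ρ π : UPath N) : negP (ρ.append π) = (negP ρ).append (negP π) := by
  simp [negP, UPath.append]

lemma negP_posList (ρ : UPath N) : (negP ρ).posList = ρ.posList.map (fun x => -x) := by
  rw [posList_eq, posList_eq, List.map_cons, List.map_map]
  show _ = _ :: ρ.steps.map ((fun x => -x) ∘ fun s => s.2.1)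
  rw [show (negP ρ).steps = ρ.steps.map negS from rfl, List.map_map]
  rfl

lemma negP_posFinset (ρ : UPath N) :
    (negP ρ).posFinset = ρ.posFinset.image (fun x => -x) := by
  ext x
  simp only [mem_posFinset_iff, negP_posList, List.mem_map, Finset.mem_image]

lemma image_neg_Icc (a b : ℤ) :
    (Finset.Icc a b).image (fun x => -x) = Finset.Icc (-b) (-a) := by
  ext x
  simp only [Finset.mem_image, Finset.mem_Icc]
  constructor
  · rintro ⟨y, hy, rfl⟩; omega
  · intro h; exact ⟨-x, by omega, by omega⟩

lemma negP_subpath {θ ρ : UPath N} (h : θ.IsSubpath ρ) :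
    (negP θ).IsSubpath (negP ρ) := by
  obtain ⟨pre, post, hs, hf⟩ := h
  refine ⟨pre.map negS, post.map negS, ?_, ?_⟩
  · show ρ.steps.map negS = _
    rw [hs]
    simp [negP]
  · show negV θ.first = _
    rw [hf]
    exact (negP_last (UPath.mk ρ.first pre)).symm

lemma negP_leftCorner {ρ : UPath N} (h : ρ.IsLeftCorner) : (negP ρ).IsRightCorner := by
  obtain ⟨hne, hlast, d, hpos⟩ := h
  refine ⟨by simpa [negP] using hne, ?_, d, ?_⟩
  · rw [negP_last]
    show -ρ.last.1 = -ρ.first.1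
    rw [hlast]
  · rw [negP_posFinset, hpos, image_neg_Icc]
    show _ = Finset.Icc (-ρ.first.1) (-ρ.first.1 + d)
    congr 1 <;> omega

lemma negP_basic {ρ : UPath N} (h : ρ.IsBasic) : (negP ρ).IsBasic := by
  intro s hs
  rw [show (negP ρ).steps = ρ.steps.map negS from rfl, ← List.map_dropLast] at hs
  obtain ⟨t, ht, rfl⟩ := List.mem_map.1 hs
  have := h t ht
  show -t.2.1 ≠ -ρ.first.1
  omega

lemma negP_extent (ρ : UPath N) : (negP ρ).extent = ρ.extent := by
  have hS := negP_posFinset ρ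
  have h1 : (negP ρ).posFinset.max' (negP ρ).posFinset_nonempty
      = - ρ.posFinset.min' ρ.posFinset_nonempty := by
    apply le_antisymm
    · apply Finset.max'_le
      intro y hy
      rw [hS] at hy
      obtain ⟨x, hx, rfl⟩ := Finset.mem_image.1 hy
      have := Finset.min'_le ρ.posFinset x hx
      omega
    · apply Finset.le_max'
      rw [hS]
      exact Finset.mem_image_of_mem _ (Finset.min'_mem _ _)
  have h2 : (negP ρ).posFinset.min' (negP ρ).posFinset_nonempty
      = - ρ.posFinset.max' ρ.posFinset_nonempty := by
    apply le_antisymm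
    · apply Finset.min'_le
      rw [hS]
      exact Finset.mem_image_of_mem _ (Finset.max'_mem _ _)
    · apply Finset.le_min'
      intro y hy
      rw [hS] at hy
      obtain ⟨x, hx, rfl⟩ := Finset.mem_image.1 hy
      have := Finset.le_max' ρ.posFinset x hx
      omega
  show _ - _ = _ - _
  rw [h1, h2]
  ring

/- ### The core construction: extracting an earlier left lb-corner -/

lemma core (ξ₁ θ : UPath N) (hj : θ.first = ξ₁.last)
    (hadj : Adj1 (ξ₁.append θ).posList) (M : ℤ)
    (hM1 : M ∈ ξ₁.posList) (hM2 : M ∈ θ.posList) (hk : θ.first.1 < M) :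
    ∃ θ' : UPath N, θ'.IsSubpath (ξ₁.append θ) ∧ θ'.first.1 = M ∧
      θ'.IsLeftCorner ∧ θ'.IsBasic ∧ M - θ.first.1 ≤ θ'.extent := by
  classical
  -- split `ξ₁.steps` at the last visit of position `M`
  obtain ⟨pre0, A₂, w, hA_split, hwdef, hw, hA₂⟩ :
      ∃ pre0 A₂ w, ξ₁.steps = pre0 ++ A₂ ∧ w = (UPath.mk ξ₁.first pre0).last ∧
        w.1 = M ∧ ∀ t ∈ A₂, t.2.1 ≠ M := by
    by_cases hA : ∃ s ∈ ξ₁.steps, s.2.1 = M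
    · obtain ⟨A₁, s0, A₂, hsplit, hs0, hA₂⟩ := exists_getLast_split _ _ hA
      refine ⟨A₁ ++ [s0], A₂, s0.2, by rw [hsplit]; simp, ?_, hs0, hA₂⟩
      show s0.2 = ((A₁ ++ [s0]).map Prod.snd).getLastD ξ₁.first
      rw [List.map_append, getLastD_append _ _ _ (by simp)]
      rfl
    · refine ⟨[], ξ₁.steps, ξ₁.first, rfl, rfl, ?_, fun t ht h => hA ⟨t, ht, h⟩⟩
      rw [posList_eq] at hM1
      rcases List.mem_cons.1 hM1 with h | h
      · exact h.symm
      · obtain ⟨t, ht, h'⟩ := List.mem_map.1 h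
        exact absurd ⟨t, ht, h'⟩ hA
  -- the junction vertex
  have hlastξ₁ : ξ₁.last = (A₂.map Prod.snd).getLastD w := by
    rw [last_eq, hA_split, List.map_append]
    cases A₂ with
    | nil => simp [hwdef, last_eq]
    | cons s t =>
      rw [getLastD_append _ _ _ (by simp),
        getLastD_eq_of_ne_nil _ (by simp) ξ₁.first w]
  have hjk : ξ₁.last.1 = θ.first.1 := by rw [hj]
  have hA₂ne : A₂ ≠ [] := by
    intro h
    rw [h] at hlastξ₁
    simp only [List.map_nil, List.getLastD_nil] at hlastξ₁
    rw [hlastξ₁, hw] at hjk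
    omega
  -- split `θ.steps` at the first visit of `M`
  have hB : ∃ s ∈ θ.steps, s.2.1 = M := by
    rw [posList_eq] at hM2
    rcases List.mem_cons.1 hM2 with h | h
    · omega
    · obtain ⟨t, ht, h'⟩ := List.mem_map.1 h
      exact ⟨t, ht, h'⟩
  obtain ⟨B₁, s', B₂, hB_split, hs', hB₁⟩ := exists_head_split _ _ hB
  set θ' : UPath N := ⟨w, A₂ ++ (B₁ ++ [s'])⟩ with hθ'def
  -- subpath structure
  have hsteps : (ξ₁.append θ).steps = pre0 ++ θ'.steps ++ B₂ := by
    show ξ₁.steps ++ θ.steps = _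
    rw [hA_split, hB_split, hθ'def]
    simp
  have hfirst' : θ'.first = (UPath.mk (ξ₁.append θ).first pre0).last := hwdef
  have hsub : θ'.IsSubpath (ξ₁.append θ) := ⟨pre0, B₂, hsteps, hfirst'⟩
  -- adjacency facts
  have hvinf : θ'.vertices <:+: (ξ₁.append θ).vertices :=
    vertices_infix _ _ pre0 B₂ hsteps hfirst'
  have hadjθ' : Adj1 θ'.posList := hadj.infix (posList_infix hvinf)
  have hθinf : θ.vertices <:+: (ξ₁.append θ).vertices :=
    vertices_infix _ _ ξ₁.steps [] (by simp [UPath.append]) hj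
  have hadjθ : Adj1 θ.posList := hadj.infix (posList_infix hθinf)
  -- the junction vertex lies in `θ'`
  have hjunc_mem : ξ₁.last ∈ w :: A₂.map Prod.snd := by
    rw [hlastξ₁]
    exact List.getLastD_mem_cons
  have hjuncA₂ : ξ₁.last ∈ A₂.map Prod.snd := by
    rcases List.mem_cons.1 hjunc_mem with h | h
    · rw [h, hw] at hjk
      omega
    · exact h
  -- positions along `A₂` stay at most `M`
  have hadjLA : Adj1 (A₂.map fun s : ℤ × Vtx N => s.2.1) := by
    apply hadjθ'.infix
    rw [posList_eq, hθ'def]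
    exact ⟨[w.1], (B₁ ++ [s']).map fun s => s.2.1, by simp⟩
  have hkLA : θ.first.1 ∈ A₂.map fun s : ℤ × Vtx N => s.2.1 := by
    obtain ⟨t, ht, h'⟩ := List.mem_map.1 hjuncA₂
    exact List.mem_map.2 ⟨t, ht, by rw [← hjk, ← h']⟩
  have hLA_le : ∀ x ∈ A₂.map fun s : ℤ × Vtx N => s.2.1, x ≤ M := by
    intro x hx
    by_contra hgt
    have hMmem : M ∈ A₂.map fun s : ℤ × Vtx N => s.2.1 :=
      ivt _ hadjLA _ hkLA x hx (le_of_lt hk) (by omega)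
    obtain ⟨t, ht, h'⟩ := List.mem_map.1 hMmem
    exact hA₂ t ht h'
  -- positions along `B₁` stay at most `M`
  have hadjLB : Adj1 (θ.first.1 :: (B₁.map fun s : ℤ × Vtx N => s.2.1)) := by
    apply hadjθ.infix
    rw [posList_eq, hB_split]
    exact ⟨[], (s' :: B₂).map fun s => s.2.1, by simp⟩
  have hLB_le : ∀ x ∈ θ.first.1 :: (B₁.map fun s : ℤ × Vtx N => s.2.1), x ≤ M := by
    intro x hx
    by_contra hgt
    have hMmem : M ∈ θ.first.1 :: (B₁.map fun s : ℤ × Vtx N => s.2.1) :=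
      ivt _ hadjLB _ (List.mem_cons_self) x hx (le_of_lt hk) (by omega)
    rcases List.mem_cons.1 hMmem with h | h
    · omega
    · obtain ⟨t, ht, h'⟩ := List.mem_map.1 h
      exact hB₁ t ht h'
  -- all positions of `θ'` are at most `M`
  have hall_le : ∀ x ∈ θ'.posList, x ≤ M := by
    intro x hx
    rw [posList_eq, hθ'def] at hx
    simp only [List.map_append, List.mem_cons, List.mem_append] at hx
    rcases hx with rfl | (h | (h | h))
    · exact le_of_eq hw
    · exact hLA_le _ h
    · exact hLB_le _ (List.mem_cons_of_mem _ h)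
    · simp only [List.map_cons, List.map_nil, List.mem_singleton] at h
      rw [h, hs']
  -- membership facts
  have hMpos : M ∈ θ'.posList := by
    have := first_mem_posList θ'
    rw [hθ'def] at this
    rwa [hw] at this
  have hMfin : M ∈ θ'.posFinset := mem_posFinset_iff.2 hMpos
  have hkfin : θ.first.1 ∈ θ'.posFinset := by
    apply mem_posFinset_iff.2
    have hv : ξ₁.last ∈ θ'.vertices := by
      rcases List.mem_cons.1 hjunc_mem with h | h
      · rw [h]
        exact List.mem_cons_self
      · apply List.mem_cons_of_mem
        rw [hθ'def]
        show ξ₁.last ∈ (A₂ ++ (B₁ ++ [s'])).map Prod.snd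
        rw [List.map_append]
        exact List.mem_append_left _ h
    have hm := mem_posList_of_mem_vertices hv
    rw [hj]
    exact hm
  have hne' : θ'.posFinset.Nonempty := θ'.posFinset_nonempty
  have hmax : θ'.posFinset.max' hne' = M :=
    le_antisymm (Finset.max'_le _ _ _ fun y hy => hall_le y (mem_posFinset_iff.1 hy))
      (Finset.le_max' _ _ hMfin)
  set m0 := θ'.posFinset.min' hne' with hm0def
  have hm0k : m0 ≤ θ.first.1 := Finset.min'_le _ _ hkfin
  have hm0M : m0 ≤ M := le_trans hm0k (le_of_lt hk)
  have hIcc : θ'.posFinset = Finset.Icc m0 M := by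
    ext x
    rw [Finset.mem_Icc]
    constructor
    · intro hx
      exact ⟨Finset.min'_le _ _ hx, hall_le x (mem_posFinset_iff.1 hx)⟩
    · rintro ⟨hx1, hx2⟩
      exact mem_posFinset_iff.2
        (ivt _ hadjθ' m0 (mem_posFinset_iff.1 (Finset.min'_mem _ _)) M hMpos hx1 hx2)
  have hfirst1 : θ'.first.1 = M := by
    rw [hθ'def]
    exact hw
  have hlast1 : θ'.last.1 = θ'.first.1 := by
    rw [hfirst1, last_eq, hθ'def]
    show (((A₂ ++ (B₁ ++ [s'])).map Prod.snd).getLastD w).1 = M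
    rw [List.map_append, getLastD_append _ _ _ (by simp), List.map_append,
      getLastD_append _ _ _ (by simp)]
    exact hs'
  have hextent : θ'.extent = M - m0 := by
    show θ'.posFinset.max' _ - θ'.posFinset.min' _ = M - m0
    rw [hmax, hm0def]
  refine ⟨θ', hsub, hfirst1, ⟨?_, hlast1, (M - m0).toNat, ?_⟩, ?_, ?_⟩
  · rw [hθ'def]
    simp
  · have hcast : ((M - m0).toNat : ℤ) = M - m0 := Int.toNat_of_nonneg (by omega)
    rw [hIcc]
    congr 1
    · omega
    · exact hfirst1.symm
  · intro s hs
    rw [hθ'def] at hs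
    have hdl : (A₂ ++ (B₁ ++ [s'])).dropLast = A₂ ++ B₁ := by
      rw [show A₂ ++ (B₁ ++ [s']) = (A₂ ++ B₁) ++ [s'] by simp, List.dropLast_concat]
    rw [show (UPath.mk w (A₂ ++ (B₁ ++ [s']))).steps = A₂ ++ (B₁ ++ [s']) from rfl, hdl] at hs
    rw [hfirst1]
    rcases List.mem_append.1 hs with h | h
    · exact hA₂ s h
    · exact hB₁ s h
  · rw [hextent]
    omega

end Seg7

/-- The first lb-corner of a segment `ξ ∈ segments(ρ,p,q)` is a
right corner iff `ξ` starts at position `p`, and a left corner iff `ξ` starts at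
position `q`. -/
theorem statement7 (N : ℕ) (hN : 1 ≤ N) (R : DBC N) (hbal : R.Balanced)
    (n : ℕ) (hn : 1 ≤ n) (p q : ℤ) (hp : 0 ≤ p) (hpq : p ≤ q) (hq : q ≤ (n : ℤ))
    (ρ : UPath N) (hρ : ρ.InUnfN R n) (hext : ρ.IsExtremalIn n)
    (ξ : UPath N) (hseg : IsSegmentOf ρ p q ξ)
    (θ ξ₁ ξ₂ : UPath N)
    (hdec : ξ = ξ₁.append (θ.append ξ₂))
    (h1 : θ.first = ξ₁.last) (h2 : ξ₂.first = θ.last)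
    (hθ : θ.IsLBCorner)
    (hfirst : ∀ θ' : UPath N, θ'.IsSubpath (ξ₁.append θ) → θ'.IsLBCorner → θ' = θ) :
    (θ.IsRightCorner ↔ ξ.first.1 = p) ∧ (θ.IsLeftCorner ↔ ξ.first.1 = q) := by
  classical
  open Seg7 in
  obtain ⟨⟨hθcorner, hθext⟩, hθbasic⟩ := hθ
  have hN1 : (1:ℤ) ≤ (N:ℤ) := by exact_mod_cast hN
  have hN2 : (1:ℤ) ≤ (N:ℤ)^2 := by nlinarith
  obtain ⟨hξne, pre, post, hsteps, hξfirst, hξsub, hpre, hpost⟩ := hseg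
  have hadjρ : Seg7.Adj1 ρ.posList := Seg7.adj1_posList hρ
  have hξinf : ξ.vertices <:+: ρ.vertices := Seg7.vertices_infix _ _ pre post hsteps hξfirst
  have hadjξ : Seg7.Adj1 ξ.posList := hadjρ.infix (Seg7.posList_infix hξinf)
  have hξ1first : ξ.first = ξ₁.first := by rw [hdec]; rfl
  have hζsteps : ξ.steps = [] ++ (ξ₁.append θ).steps ++ ξ₂.steps := by
    rw [hdec]; simp [UPath.append]
  have hζinf : (ξ₁.append θ).vertices <:+: ξ.vertices :=
    Seg7.vertices_infix ξ (ξ₁.append θ) [] ξ₂.steps hζsteps hξ1first.symm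
  have hadjζ : Seg7.Adj1 (ξ₁.append θ).posList := hadjξ.infix (Seg7.posList_infix hζinf)
  have hθinfξ : θ.vertices <:+: ξ.vertices :=
    Seg7.vertices_infix ξ θ ξ₁.steps ξ₂.steps (by rw [hdec]; simp [UPath.append])
      (by rw [h1, hξ1first])
  have hθsubpq : θ.posFinset ⊆ Finset.Icc p q := by
    intro x hx
    apply hξsub
    exact Seg7.mem_posFinset_iff.2
      ((Seg7.posList_infix hθinfξ).subset (Seg7.mem_posFinset_iff.1 hx))
  have hadjξ₁ : Seg7.Adj1 ξ₁.posList := by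
    apply hadjζ.infix
    apply Seg7.posList_infix
    exact Seg7.vertices_infix (ξ₁.append θ) ξ₁ [] θ.steps (by simp [UPath.append]) rfl
  have hq1 : ξ.first.1 ∈ ξ₁.posList := by
    rw [hξ1first]; exact Seg7.first_mem_posList ξ₁
  have hk1 : θ.first.1 ∈ ξ₁.posList := by
    rw [h1]; exact Seg7.mem_posList_of_mem_vertices (Seg7.last_mem_vertices ξ₁)
  -- `ξ` starts at `p` or at `q`
  have hξfirst_in : p ≤ ξ.first.1 ∧ ξ.first.1 ≤ q := by
    have := hξsub (Seg7.mem_posFinset_iff.2 (Seg7.first_mem_posList ξ))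
    exact Finset.mem_Icc.1 this
  have hξfirst_pq : ξ.first.1 = p ∨ ξ.first.1 = q := by
    rcases List.eq_nil_or_concat pre with rfl | ⟨pre', s, rfl⟩
    · have h0 : ξ.first = ρ.first := hξfirst
      rcases hext.1 with h | h
      · left
        rw [h0, h] at hξfirst_in
        rw [h0, h]
        omega
      · right
        rw [h0, h] at hξfirst_in
        rw [h0, h]
        omega
    · simp only [List.concat_eq_append] at hsteps hξfirst
      have hu : ξ.first = s.2 := by
        rw [hξfirst, Seg7.last_eq]
        show ((pre' ++ [s]).map Prod.snd).getLastD ρ.first = s.2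
        rw [List.map_append, Seg7.getLastD_append _ _ _ (by simp)]
        rfl
      have hnr : ¬ StepInRange p q (UPath.mk ρ.first pre').last s.2 :=
        hpre pre' s.1 s.2 (by simp)
      have hinf2 : [(UPath.mk ρ.first pre').last, s.2] <:+: ρ.vertices := by
        refine ⟨(ρ.first :: pre'.map Prod.snd).dropLast, (ξ.steps ++ post).map Prod.snd, ?_⟩
        have hkey : (ρ.first :: pre'.map Prod.snd).dropLast ++ [(UPath.mk ρ.first pre').last]
            = ρ.first :: pre'.map Prod.snd := (Seg7.cons_eq_dropLast_append _ _).symm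
        calc (ρ.first :: pre'.map Prod.snd).dropLast ++ [(UPath.mk ρ.first pre').last, s.2]
              ++ (ξ.steps ++ post).map Prod.snd
            = ((ρ.first :: pre'.map Prod.snd).dropLast ++ [(UPath.mk ρ.first pre').last])
              ++ ([s.2] ++ (ξ.steps ++ post).map Prod.snd) := by simp
          _ = (ρ.first :: pre'.map Prod.snd) ++ ([s.2] ++ (ξ.steps ++ post).map Prod.snd) := by
              rw [hkey]
          _ = ρ.vertices := by
              show _ = ρ.first :: ρ.steps.map Prod.snd
              rw [hsteps]
              simp
      have hadj2 : |(UPath.mk ρ.first pre').last.1 - s.2.1| ≤ 1 := by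
        have h3 : List.Chain' (fun a b => |a - b| ≤ 1)
            [(UPath.mk ρ.first pre').last.1, s.2.1] := by
          have h4 := hadjρ.infix (List.IsInfix.map Prod.fst hinf2)
          simpa only [Seg7.Adj1, List.map_cons, List.map_nil] using h4
        exact (List.isChain_pair (R := fun a b => |a - b| ≤ 1)).1 h3
      rw [hu] at hξfirst_in ⊢
      unfold StepInRange at hnr
      push_neg at hnr
      rw [abs_le] at hadj2
      omega
  -- Key 1: if `ξ` starts at `q`, the first lb-corner cannot be a right corner
  have key1 : ξ.first.1 = q → ¬ θ.IsRightCorner := by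
    intro hfq hR
    obtain ⟨hne0, hlast0, d, hpos0⟩ := hR
    have hkmem : θ.first.1 ∈ θ.posFinset := Seg7.mem_posFinset_iff.2 (Seg7.first_mem_posList θ)
    have hkd_mem : θ.first.1 + d ∈ θ.posFinset := by
      rw [hpos0]
      exact Finset.mem_Icc.2 ⟨by linarith [Int.ofNat_nonneg d], le_refl _⟩
    have hkdq : θ.first.1 + d ≤ q := (Finset.mem_Icc.1 (hθsubpq hkd_mem)).2
    have hext_eq : θ.extent = (d : ℤ) := by
      have hmax : θ.posFinset.max' θ.posFinset_nonempty = θ.first.1 + d :=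
        le_antisymm
          (Finset.max'_le _ _ _ fun y hy => by
            rw [hpos0] at hy; exact (Finset.mem_Icc.1 hy).2)
          (Finset.le_max' _ _ hkd_mem)
      have hmin : θ.posFinset.min' θ.posFinset_nonempty = θ.first.1 :=
        le_antisymm (Finset.min'_le _ _ hkmem)
          (Finset.le_min' _ _ _ fun y hy => by
            rw [hpos0] at hy; exact (Finset.mem_Icc.1 hy).1)
      show _ - _ = _
      rw [hmax, hmin]
      ring
    have hd : (N:ℤ)^2 < (d : ℤ) := by rw [hext_eq] at hθext; exact hθext
    have hM2 : θ.first.1 + (N:ℤ)^2 + 1 ∈ θ.posList := by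
      apply Seg7.mem_posFinset_iff.1
      rw [hpos0]
      exact Finset.mem_Icc.2 ⟨by linarith, by linarith⟩
    have hM1 : θ.first.1 + (N:ℤ)^2 + 1 ∈ ξ₁.posList :=
      Seg7.ivt _ hadjξ₁ _ hk1 _ hq1 (by linarith) (by rw [hfq]; linarith)
    obtain ⟨θ', hsub', hfirst'1, hleft', hbasic', hext'⟩ :=
      Seg7.core ξ₁ θ h1 hadjζ _ hM1 hM2 (by linarith)
    have hlb' : θ'.IsLBCorner := ⟨⟨Or.inr hleft', by linarith⟩, hbasic'⟩
    have heq := hfirst θ' hsub' hlb'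
    rw [heq] at hfirst'1
    linarith
  -- Key 2: if `ξ` starts at `p`, the first lb-corner cannot be a left corner
  have key2 : ξ.first.1 = p → ¬ θ.IsLeftCorner := by
    intro hfp hL
    obtain ⟨hne0, hlast0, d, hpos0⟩ := hL
    have hkmem : θ.first.1 ∈ θ.posFinset := Seg7.mem_posFinset_iff.2 (Seg7.first_mem_posList θ)
    have hkd_mem : θ.first.1 - d ∈ θ.posFinset := by
      rw [hpos0]
      exact Finset.mem_Icc.2 ⟨le_refl _, by linarith [Int.ofNat_nonneg d]⟩
    have hkdp : p ≤ θ.first.1 - d := (Finset.mem_Icc.1 (hθsubpq hkd_mem)).1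
    have hext_eq : θ.extent = (d : ℤ) := by
      have hmax : θ.posFinset.max' θ.posFinset_nonempty = θ.first.1 :=
        le_antisymm
          (Finset.max'_le _ _ _ fun y hy => by
            rw [hpos0] at hy; exact (Finset.mem_Icc.1 hy).2)
          (Finset.le_max' _ _ hkmem)
      have hmin : θ.posFinset.min' θ.posFinset_nonempty = θ.first.1 - d :=
        le_antisymm (Finset.min'_le _ _ hkd_mem)
          (Finset.le_min' _ _ _ fun y hy => by
            rw [hpos0] at hy; exact (Finset.mem_Icc.1 hy).1)
      show _ - _ = _
      rw [hmax, hmin]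
      ring
    have hd : (N:ℤ)^2 < (d : ℤ) := by rw [hext_eq] at hθext; exact hθext
    have hM2 : θ.first.1 - (N:ℤ)^2 - 1 ∈ θ.posList := by
      apply Seg7.mem_posFinset_iff.1
      rw [hpos0]
      exact Finset.mem_Icc.2 ⟨by linarith, by linarith⟩
    have hM1 : θ.first.1 - (N:ℤ)^2 - 1 ∈ ξ₁.posList :=
      Seg7.ivt _ hadjξ₁ _ hq1 _ hk1 (by rw [hfp]; linarith) (by linarith)
    -- pass to the negated paths and apply the core construction
    have hjneg : (Seg7.negP θ).first = (Seg7.negP ξ₁).last := by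
      rw [Seg7.negP_last]
      show Seg7.negV θ.first = _
      rw [h1]
    have hadjneg : Seg7.Adj1 ((Seg7.negP ξ₁).append (Seg7.negP θ)).posList := by
      rw [← Seg7.negP_append, Seg7.negP_posList]
      unfold Seg7.Adj1 List.Chain'
      rw [List.isChain_map]
      refine List.IsChain.imp ?_ hadjζ
      intro a b hab
      have h' : -a - -b = -(a - b) := by ring
      show |-a - -b| ≤ 1
      rw [h', abs_neg]
      exact hab
    have hM1neg : -(θ.first.1 - (N:ℤ)^2 - 1) ∈ (Seg7.negP ξ₁).posList := by
      rw [Seg7.negP_posList]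
      exact List.mem_map.2 ⟨_, hM1, rfl⟩
    have hM2neg : -(θ.first.1 - (N:ℤ)^2 - 1) ∈ (Seg7.negP θ).posList := by
      rw [Seg7.negP_posList]
      exact List.mem_map.2 ⟨_, hM2, rfl⟩
    have hkneg : (Seg7.negP θ).first.1 < -(θ.first.1 - (N:ℤ)^2 - 1) := by
      show -θ.first.1 < _
      linarith
    obtain ⟨θ'', hsub'', hfirst''1, hleft'', hbasic'', hext''⟩ :=
      Seg7.core (Seg7.negP ξ₁) (Seg7.negP θ) hjneg hadjneg _ hM1neg hM2neg hkneg
    have hsub' : (Seg7.negP θ'').IsSubpath (ξ₁.append θ) := by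
      have := Seg7.negP_subpath hsub''
      rwa [← Seg7.negP_append, Seg7.negP_negP] at this
    have hright' : (Seg7.negP θ'').IsRightCorner := Seg7.negP_leftCorner hleft''
    have hbasic' : (Seg7.negP θ'').IsBasic := Seg7.negP_basic hbasic''
    have hfirstneg : (Seg7.negP θ).first.1 = -θ.first.1 := rfl
    have hextent' : (N:ℤ)^2 < (Seg7.negP θ'').extent := by
      rw [Seg7.negP_extent]
      rw [hfirstneg] at hext''
      linarith
    have hlb' : (Seg7.negP θ'').IsLBCorner := ⟨⟨Or.inl hright', hextent'⟩, hbasic'⟩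
    have heq := hfirst (Seg7.negP θ'') hsub' hlb'
    have hfn : (Seg7.negP θ'').first.1 = -θ''.first.1 := rfl
    rw [heq] at hfn
    rw [hfirst''1] at hfn
    linarith
  constructor
  · constructor
    · intro hR
      rcases hξfirst_pq with h | h
      · exact h
      · exact absurd hR (key1 h)
    · intro h
      rcases hθcorner with hR | hL
      · exact hR
      · exact absurd hL (key2 h)
  · constructor
    · intro hL
      rcases hξfirst_pq with h | h
      · exact absurd hL (key2 h)
      · exact h
    · intro h
      rcases hθcorner with hR | hL
      · exact absurd hR (key1 h)
      · exact hL
end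

section
/- Let ρ be a right corner of extent e starting at position k, in an unfolding of the constraint graph of a difference bounds constraint over N variables, and let d ∈ {1,…,e}. Then there exists a subpath ρ' of ρ which is a basic right corner of extent d starting at position k+e−d. -/
variable {N : ℕ}

private lemma aux_getD_cons_length {α : Type*} (l : List α) (u dflt : α) :
    (u :: l).getD l.length dflt = l.getLastD u := by
  induction l generalizing u with
  | nil => rfl
  | cons a t ih =>
    show (u :: a :: t).getD (t.length + 1) dflt = (a :: t).getLastD u
    rw [List.getD_cons_succ, ih a, List.getLastD_cons]

private lemma aux_mk_last (u : Vtx N) (l : List (ℤ × Vtx N)) (dflt : Vtx N) :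
    (UPath.mk u l).last = (u :: l.map Prod.snd).getD l.length dflt := by
  have h := aux_getD_cons_length (l.map Prod.snd) u dflt
  simp only [List.length_map] at h
  simpa [UPath.last] using h.symm

private lemma aux_ivt (g : ℕ → ℤ) (hstep : ∀ t, g (t + 1) ≤ g t + 1)
    {a b : ℕ} (hab : a ≤ b) {x : ℤ} (ha : g a ≤ x) (hb : x ≤ g b) :
    ∃ t, a ≤ t ∧ t ≤ b ∧ g t = x := by
  classical
  set P : ℕ → Prop := fun t => a ≤ t ∧ g t ≤ x with hPdef
  have hPa : P a := ⟨le_rfl, ha⟩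
  have hspec : P (Nat.findGreatest P b) := Nat.findGreatest_spec hab hPa
  have hle : Nat.findGreatest P b ≤ b := Nat.findGreatest_le b
  rcases eq_or_lt_of_le hle with h | h
  · exact ⟨b, h ▸ hspec.1, le_rfl, le_antisymm (h ▸ hspec.2) hb⟩
  · refine ⟨Nat.findGreatest P b, hspec.1, hle, ?_⟩
    have hnot : ¬ P (Nat.findGreatest P b + 1) :=
      Nat.findGreatest_is_greatest (Nat.lt_succ_self _) h
    have h1 : x < g (Nat.findGreatest P b + 1) := by
      by_contra hc
      exact hnot ⟨le_trans hspec.1 (Nat.le_succ _), not_lt.mp hc⟩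
    have h2 := hstep (Nat.findGreatest P b)
    have h3 := hspec.2
    omega

private lemma aux_chain_adj (R : DBC N) :
    ∀ (l : List (ℤ × Vtx N)) (u : Vtx N), UPath.EdgeChain R.Edge u l →
      List.Chain' (fun a b : Vtx N => b.1 ≤ a.1 + 1 ∧ a.1 ≤ b.1 + 1)
        (u :: l.map Prod.snd)
  | [], _, _ => List.isChain_singleton _
  | s :: rest, u, h => by
    obtain ⟨hedge, hchain⟩ := h
    refine List.IsChain.cons_cons ?_ (aux_chain_adj R rest s.2 hchain)
    obtain ⟨p, a, b, _, hu, hv⟩ := hedge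
    rw [hu, hv]
    cases a <;> cases b <;> simp [endpt] <;> omega


/-- A right corner of extent `e` starting at position `k` has,
for each `1 ≤ d ≤ e`, a basic right corner subpath of extent `d` starting at
position `k + e − d`. -/
theorem statement9 (N : ℕ) (hN : 1 ≤ N) (R : DBC N) (ρ : UPath N)
    (hρ : ρ.InUnf R) (hrc : ρ.IsRightCorner)
    (k e : ℤ) (hk : ρ.first.1 = k) (he : ρ.extent = e)
    (d : ℤ) (hd1 : 1 ≤ d) (hde : d ≤ e) :
    ∃ ρ' : UPath N, ρ'.IsSubpath ρ ∧ ρ'.IsBasic ∧ ρ'.IsRightCorner ∧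
      ρ'.extent = d ∧ ρ'.first.1 = k + e - d := by
  classical
  obtain ⟨hne, hvert, d0, hS⟩ := hrc
  rw [hk] at hS
  set n := ρ.steps.length with hn
  have hnpos : 0 < n := List.length_pos_iff.mpr hne
  set v : ℕ → Vtx N := fun t => ρ.vertices.getD t ρ.last with hv
  set g : ℕ → ℤ := fun t => (v t).1 with hg
  have hVlen : ρ.vertices.length = n + 1 := by simp [UPath.vertices, hn]
  have hlastk : ρ.last.1 = k := by rw [hvert, hk]
  have hvElem : ∀ t (ht : t < n + 1), v t = ρ.vertices.get ⟨t, by rw [hVlen]; exact ht⟩ := by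
    intro t ht
    simp only [hv]
    rw [List.getD_eq_getElem _ _ (by rw [hVlen]; exact ht)]
    simp
  have hvlast : ∀ t, n ≤ t → v t = ρ.last := by
    intro t ht
    rcases eq_or_lt_of_le ht with h | h
    · simp only [hv]
      rw [← h]
      have h2 := aux_getD_cons_length (ρ.steps.map Prod.snd) ρ.first ρ.last
      simp only [List.length_map, ← hn] at h2
      simpa [UPath.vertices, UPath.last] using h2
    · simp only [hv]
      exact List.getD_eq_default _ _ (by omega)
  have hchain : List.Chain' (fun a b : Vtx N => b.1 ≤ a.1 + 1 ∧ a.1 ≤ b.1 + 1) ρ.vertices :=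
    aux_chain_adj R ρ.steps ρ.first hρ
  have hstep : ∀ t, g (t + 1) ≤ g t + 1 ∧ g t ≤ g (t + 1) + 1 := by
    intro t
    rcases lt_or_ge t n with h | h
    · have h2 := hchain.getElem t (by rw [hVlen]; omega)
      have e1 := hvElem t (by omega)
      have e2 := hvElem (t + 1) (by omega)
      simp only [List.get_eq_getElem] at e1 e2
      simp only [hg, e1, e2]
      exact h2
    · simp only [hg, hvlast t h, hvlast (t + 1) (by omega)]
      omega
  have hd0e : (d0 : ℤ) = e := by
    have hne' := ρ.posFinset_nonempty
    have hkk : k ≤ k + (d0 : ℤ) := by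
      have : (0 : ℤ) ≤ (d0 : ℤ) := Int.natCast_nonneg d0
      omega
    have hmax : ρ.posFinset.max' hne' = k + d0 := by
      apply le_antisymm
      · apply Finset.max'_le
        intro x hx; rw [hS] at hx; exact (Finset.mem_Icc.mp hx).2
      · exact Finset.le_max' _ _ (by rw [hS]; exact Finset.mem_Icc.mpr ⟨hkk, le_rfl⟩)
    have hmin : ρ.posFinset.min' hne' = k := by
      apply le_antisymm
      · exact Finset.min'_le _ _ (by rw [hS]; exact Finset.mem_Icc.mpr ⟨le_rfl, hkk⟩)
      · apply Finset.le_min'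
        intro x hx; rw [hS] at hx; exact (Finset.mem_Icc.mp hx).1
    have h3 : ρ.posFinset.max' hne' - ρ.posFinset.min' hne' = e := he
    omega
  have hbound : ∀ t, k ≤ g t ∧ g t ≤ k + e := by
    intro t
    rcases le_or_gt t n with h | h
    · have hmem : (v t).1 ∈ ρ.posFinset := by
        simp only [UPath.posFinset, UPath.posList, List.mem_toFinset]
        refine List.mem_map_of_mem (f := Prod.fst) ?_
        rw [hvElem t (by omega)]
        exact List.get_mem ..
      rw [hS] at hmem
      have h2 := Finset.mem_Icc.mp hmem
      simp only [hg]
      omega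
    · simp only [hg, hvlast t (by omega)]
      omega
  have hg0 : g 0 = k := by
    simp only [hg, hv, UPath.vertices, List.getD_cons_zero]
    exact hk
  have hMex : ∃ M, M ≤ n ∧ g M = k + e := by
    have hkE : k + e ∈ ρ.posFinset := by
      rw [hS]; exact Finset.mem_Icc.mpr ⟨by omega, by omega⟩
    simp only [UPath.posFinset, UPath.posList, List.mem_toFinset, List.mem_map] at hkE
    obtain ⟨u, hu, hu1⟩ := hkE
    obtain ⟨t, ht, hts⟩ := List.mem_iff_getElem.mp hu
    rw [hVlen] at ht
    refine ⟨t, by omega, ?_⟩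
    have h2 : v t = u := by
      rw [hvElem t ht]
      simpa [List.get_eq_getElem] using hts
    simp only [hg, h2]
    exact hu1
  obtain ⟨M, hMn, hgM⟩ := hMex
  -- the level L = k + e - d
  set P1 : ℕ → Prop := fun t => g t ≤ k + e - d with hP1
  have hP10 : P1 0 := by simp only [hP1]; omega
  set i := Nat.findGreatest P1 M with hi
  have hgi : g i ≤ k + e - d := Nat.findGreatest_spec (Nat.zero_le M) hP10
  have hiM : i ≤ M := Nat.findGreatest_le M
  have hiltM : i < M := by
    rcases eq_or_lt_of_le hiM with h | h
    · exfalso; rw [h, hgM] at hgi; omega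
    · exact h
  have habove : ∀ t, i < t → t ≤ M → k + e - d < g t := by
    intro t h1 h2
    have h3 : ¬ P1 t := Nat.findGreatest_is_greatest h1 h2
    simp only [hP1] at h3
    omega
  have hgieq : g i = k + e - d := by
    have h1 : k + e - d < g (i + 1) := habove (i + 1) (Nat.lt_succ_self i) (by omega)
    have h2 := (hstep i).1
    omega
  have hex : ∃ s, g (M + 1 + s) ≤ k + e - d := by
    refine ⟨n, ?_⟩
    simp only [hg, hvlast (M + 1 + n) (by omega)]
    omega
  set j := M + 1 + Nat.find hex with hj
  have hgj : g j ≤ k + e - d := Nat.find_spec hex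
  have hMj : M < j := by omega
  have hmid : ∀ t, M < t → t < j → k + e - d < g t := by
    intro t h1 h2
    have h3 : t - (M + 1) < Nat.find hex := by omega
    have h4 := Nat.find_min hex h3
    have h5 : M + 1 + (t - (M + 1)) = t := by omega
    rw [h5] at h4
    omega
  have hmid' : ∀ t, i < t → t < j → k + e - d < g t := by
    intro t h1 h2
    rcases le_or_gt t M with h | h
    · exact habove t h1 h
    · exact hmid t h h2
  have hgjeq : g j = k + e - d := by
    have h1 : k + e - d < g (j - 1) := by
      rcases eq_or_lt_of_le (show M ≤ j - 1 by omega) with h | h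
      · rw [← h, hgM]; omega
      · exact hmid (j - 1) h (by omega)
    have h2 := (hstep (j - 1)).2
    rw [show j - 1 + 1 = j by omega] at h2
    omega
  have hMn' : M < n := by
    by_contra hcon
    have h6 : v M = ρ.last := hvlast M (by omega)
    have h7 : g M = k := by simp only [hg, h6]; exact hlastk
    omega
  have hjn : j ≤ n := by
    by_contra hcon
    have h7 : g n = k := by simp only [hg, hvlast n le_rfl]; exact hlastk
    have h8 := hmid n hMn' (by omega)
    omega
  clear_value i j
  clear hρ hchain hj hex hi
  -- the subpath
  have hstlen : ((ρ.steps.drop i).take (j - i)).length = j - i := by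
    rw [List.length_take, List.length_drop]; omega
  have hstelem : ∀ t (h : t < j - i),
      ((ρ.steps.drop i).take (j - i))[t]'(by rw [hstlen]; exact h) =
        ρ.steps[i + t]'(by omega) := by
    intro t h
    rw [List.getElem_take, List.getElem_drop]
  have hsnd : ∀ t (ht : t < n), v (t + 1) = (ρ.steps[t]'(by omega)).2 := by
    intro t ht
    rw [hvElem (t + 1) (by omega)]
    simp [UPath.vertices, List.get_eq_getElem]
  have hv'1 : (v i :: ((ρ.steps.drop i).take (j - i)).map Prod.snd) =
      (List.range (j - i + 1)).map (fun t => v (i + t)) := by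
    apply List.ext_getElem
    · simp only [List.length_cons, List.length_map, List.length_range, hstlen]
    · intro t h1 h2
      rcases t with _ | s
      · simp
      · have hs : s < j - i := by
          rw [List.length_cons, List.length_map, hstlen] at h1
          omega
        simp only [List.getElem_cons_succ, List.getElem_map, List.getElem_range]
        rw [hstelem s hs]
        rw [← hsnd (i + s) (by omega), Nat.add_assoc]
  have hlast' : (UPath.mk (v i) ((ρ.steps.drop i).take (j - i))).last = v j := by
    rw [aux_mk_last (v i) _ ρ.last, hstlen, hv'1]
    rw [List.getD_eq_getElem _ _ (by simp)]
    simp only [List.getElem_map, List.getElem_range]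
    rw [show i + (j - i) = j by omega]
  have hposeq : (UPath.mk (v i) ((ρ.steps.drop i).take (j - i))).posFinset =
      Finset.Icc (k + e - d) (k + e) := by
    ext x
    have hchar : x ∈ (UPath.mk (v i) ((ρ.steps.drop i).take (j - i))).posFinset ↔
        ∃ t, t ≤ j - i ∧ g (i + t) = x := by
      show x ∈ ((v i :: ((ρ.steps.drop i).take (j - i)).map Prod.snd).map Prod.fst).toFinset ↔ _
      rw [hv'1]
      simp only [List.mem_toFinset, List.map_map, List.mem_map, List.mem_range,
        Function.comp_apply]
      constructor
      · rintro ⟨t, ht, rfl⟩; exact ⟨t, by omega, rfl⟩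
      · rintro ⟨t, ht, hx⟩; exact ⟨t, by omega, hx⟩
    rw [hchar, Finset.mem_Icc]
    clear hchar
    constructor
    · rintro ⟨t, ht, rfl⟩
      refine ⟨?_, (hbound (i + t)).2⟩
      rcases Nat.eq_zero_or_pos t with h0 | h0
      · subst h0; simp only [Nat.add_zero]; omega
      · rcases eq_or_lt_of_le ht with h1 | h1
        · rw [show i + t = j by omega]; omega
        · have := hmid' (i + t) (by omega) (by omega); omega
    · rintro ⟨h1, h2⟩
      obtain ⟨t, hti, htM, hgt⟩ := aux_ivt g (fun t => (hstep t).1) (le_of_lt hiltM)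
        (show g i ≤ x by omega) (show x ≤ g M by omega)
      have h9 : t - i ≤ j - i := by omega
      have h10 : i + (t - i) = t := by omega
      refine ⟨t - i, h9, ?_⟩
      rw [h10]
      exact hgt
  have hstne : ((ρ.steps.drop i).take (j - i)) ≠ [] := by
    intro hnil
    rw [hnil] at hstlen
    simp at hstlen
    omega
  refine ⟨UPath.mk (v i) ((ρ.steps.drop i).take (j - i)),
    ⟨ρ.steps.take i, ρ.steps.drop j, ?_, ?_⟩, ?_, ⟨hstne, ?_, d.toNat, ?_⟩, ?_, hgieq⟩
  · -- splitting of steps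
    rw [List.append_assoc]
    conv_lhs => rw [← List.take_append_drop i ρ.steps]
    congr 1
    conv_lhs => rw [← List.take_append_drop (j - i) (ρ.steps.drop i)]
    congr 1
    rw [List.drop_drop]
    congr 1
    omega
  · -- first vertex matches
    show v i = _
    rw [aux_mk_last ρ.first (ρ.steps.take i) ρ.last]
    have hlen1 : (ρ.steps.take i).length = i := by rw [List.length_take]; omega
    rw [hlen1]
    have hcons : ρ.first :: (ρ.steps.take i).map Prod.snd = ρ.vertices.take (i + 1) := by
      simp [UPath.vertices, List.map_take]
    rw [hcons]
    rw [List.getD_eq_getElem _ _ (by rw [List.length_take, hVlen]; omega)]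
    rw [List.getElem_take]
    rw [hvElem i (by omega)]
    simp
  · -- basic
    intro s hs
    obtain ⟨t, htl, hts⟩ := List.mem_iff_getElem.mp hs
    have htl' : t < j - i - 1 := by
      have h2 := htl
      rw [List.length_dropLast, hstlen] at h2
      omega
    intro hcon
    rw [← hts, List.getElem_dropLast] at hcon
    rw [hstelem t (by omega)] at hcon
    rw [← hsnd (i + t) (by omega)] at hcon
    have h5 : g (i + t + 1) = k + e - d := hcon.trans hgieq
    have h6 := hmid' (i + t + 1) (by omega) (by omega)
    omega
  · -- vertical
    show (UPath.mk (v i) ((ρ.steps.drop i).take (j - i))).last.1 = (v i).1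
    rw [hlast']
    show g j = g i
    rw [hgjeq, hgieq]
  · -- posFinset is an interval
    rw [hposeq]
    have h1 : (UPath.mk (v i) ((ρ.steps.drop i).take (j - i))).first.1 = k + e - d := hgieq
    rw [h1]
    congr 1
    rw [Int.toNat_of_nonneg (by omega)]
    ring
  · -- extent
    have hne2 := (UPath.mk (v i) ((ρ.steps.drop i).take (j - i))).posFinset_nonempty
    have hmax2 : (UPath.mk (v i) ((ρ.steps.drop i).take (j - i))).posFinset.max' hne2 = k + e := by
      apply le_antisymm
      · apply Finset.max'_le
        intro x hx; rw [hposeq] at hx; exact (Finset.mem_Icc.mp hx).2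
      · exact Finset.le_max' _ _ (by rw [hposeq]; exact Finset.mem_Icc.mpr ⟨by omega, le_rfl⟩)
    have hmin2 : (UPath.mk (v i) ((ρ.steps.drop i).take (j - i))).posFinset.min' hne2 = k + e - d := by
      apply le_antisymm
      · exact Finset.min'_le _ _ (by rw [hposeq]; exact Finset.mem_Icc.mpr ⟨le_rfl, by omega⟩)
      · apply Finset.le_min'
        intro x hx; rw [hposeq] at hx; exact (Finset.mem_Icc.mp hx).1
    simp only [UPath.extent]
    rw [hmax2, hmin2]
    ring
end

section
/- For every path ρ in an unfolding of the constraint graph of a difference bounds constraint over N variables: lbcorners(ρ) = ∅ if and only if lcorners(ρ) = ∅. That is, ρ has no lb-corner subpath if and only if it has no long-corner subpath. -/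
variable {N : ℕ}

/- ## Auxiliary lemmas for Statement 10 -/

section Aux

lemma aux_getLastD_append {α : Type*} (l1 l2 : List α) (d : α) :
    (l1 ++ l2).getLastD d = l2.getLastD (l1.getLastD d) := by
  induction l1 generalizing d with
  | nil => simp
  | cons x t ih => rw [List.cons_append, List.getLastD_cons, ih, List.getLastD_cons]

lemma aux_last_mk_append (f : Vtx N) (l1 l2 : List (ℤ × Vtx N)) :
    (UPath.mk f (l1 ++ l2)).last = (UPath.mk (UPath.mk f l1).last l2).last := by
  simp only [UPath.last, List.map_append, aux_getLastD_append]

lemma aux_subpath_trans {θ' θ ρ : UPath N} (h1 : θ'.IsSubpath θ)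
    (h2 : θ.IsSubpath ρ) : θ'.IsSubpath ρ := by
  obtain ⟨p1, q1, hs1, hf1⟩ := h1
  obtain ⟨p, q, hs, hf⟩ := h2
  refine ⟨p ++ p1, q1 ++ q, ?_, ?_⟩
  · simp [hs, hs1]
  · rw [hf1, aux_last_mk_append, ← hf]

lemma aux_edgeChain_append {E : Vtx N → Vtx N → ℤ → Prop} :
    ∀ (l1 l2 : List (ℤ × Vtx N)) (f : Vtx N),
    UPath.EdgeChain E f (l1 ++ l2) →
    UPath.EdgeChain E f l1 ∧ UPath.EdgeChain E (UPath.mk f l1).last l2 := by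
  intro l1
  induction l1 with
  | nil =>
    intro l2 f h
    exact ⟨trivial, by simpa [UPath.last] using h⟩
  | cons s t ih =>
    intro l2 f h
    obtain ⟨he, ht⟩ := h
    obtain ⟨h1, h2⟩ := ih l2 s.2 ht
    refine ⟨⟨he, h1⟩, ?_⟩
    have : (UPath.mk f (s :: t)).last = (UPath.mk s.2 t).last := by
      simp only [UPath.last, List.map_cons, List.getLastD_cons]
    rw [this]
    exact h2

lemma aux_edge_abs {R : DBC N} {u v : Vtx N} {c : ℤ} (h : R.Edge u v c) :
    |v.1 - u.1| ≤ 1 := by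
  obtain ⟨p, s, t, _, hu, hv⟩ := h
  have h1 : u.1 = p ∨ u.1 = p + 1 := by cases s <;> simp [endpt, hu]
  have h2 : v.1 = p ∨ v.1 = p + 1 := by cases t <;> simp [endpt, hv]
  rw [abs_le]
  omega

lemma aux_chain_of_edgeChain (R : DBC N) :
    ∀ (l : List (ℤ × Vtx N)) (f : Vtx N), UPath.EdgeChain R.Edge f l →
    (f.1 :: (l.map Prod.snd).map Prod.fst).Chain' (fun x y : ℤ => |y - x| ≤ 1) := by
  intro l
  induction l with
  | nil => intro f _; exact List.isChain_singleton _
  | cons s t ih =>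
    intro f h
    obtain ⟨he, ht⟩ := h
    exact List.isChain_cons_cons.mpr ⟨aux_edge_abs he, ih s.2 ht⟩

lemma aux_chain_posList_of_subpath {R : DBC N} {ρ θ : UPath N}
    (hρ : ρ.InUnf R) (h : θ.IsSubpath ρ) :
    θ.posList.Chain' (fun x y : ℤ => |y - x| ≤ 1) := by
  obtain ⟨p, q, hs, hf⟩ := h
  have h0 : UPath.EdgeChain R.Edge ρ.first (p ++ (θ.steps ++ q)) := by
    have := hρ
    rw [UPath.InUnf, hs] at this
    simpa using this
  have h1 := (aux_edgeChain_append p (θ.steps ++ q) ρ.first h0).2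
  rw [← hf] at h1
  have h2 := (aux_edgeChain_append θ.steps q θ.first h1).1
  have := aux_chain_of_edgeChain R θ.steps θ.first h2
  simpa [UPath.posList, UPath.vertices] using this

lemma aux_mem_posFinset {θ : UPath N} {x : ℤ} :
    x ∈ θ.posFinset ↔ x = θ.first.1 ∨ ∃ st ∈ θ.steps, st.2.1 = x := by
  simp [UPath.posFinset, UPath.posList, UPath.vertices, eq_comm]

lemma aux_list_ivt :
    ∀ (l : List ℤ), l.Chain' (fun x y : ℤ => |y - x| ≤ 1) →
    ∀ m a b, a ∈ l → b ∈ l → a ≤ m → m ≤ b → m ∈ l := by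
  intro l
  induction l with
  | nil => simp
  | cons x t ih =>
    intro hc m a b ha hb ham hmb
    rcases eq_or_ne m x with rfl | hmx
    · exact List.mem_cons_self
    rcases lt_or_gt_of_ne hmx with hlt | hgt
    · have ha' : a ∈ t := by
        rcases List.mem_cons.mp ha with rfl | h
        · omega
        · exact h
      cases t with
      | nil => simp at ha'
      | cons y t' =>
        have hyx : |y - x| ≤ 1 := (List.isChain_cons_cons.mp hc).1
        rw [abs_le] at hyx
        have hmy : m ≤ y := by omega
        exact List.mem_cons_of_mem _
          (ih (List.isChain_cons_cons.mp hc).2 m a y ha' (List.mem_cons_self) ham hmy)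
    · have hb' : b ∈ t := by
        rcases List.mem_cons.mp hb with rfl | h
        · omega
        · exact h
      cases t with
      | nil => simp at hb'
      | cons y t' =>
        have hyx : |y - x| ≤ 1 := (List.isChain_cons_cons.mp hc).1
        rw [abs_le] at hyx
        have hym : y ≤ m := by omega
        exact List.mem_cons_of_mem _
          (ih (List.isChain_cons_cons.mp hc).2 m y b (List.mem_cons_self) hb' hym hmb)

lemma aux_mem_posList_of_mem_posFinset {θ : UPath N} {x : ℤ}
    (h : x ∈ θ.posFinset) : x ∈ θ.posList := List.mem_toFinset.mp h

lemma aux_isLongCorner_right (γ : UPath N)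
    (hch : γ.posList.Chain' (fun x y : ℤ => |y - x| ≤ 1))
    (hne : γ.steps ≠ []) (hvert : γ.last.1 = γ.first.1)
    (e : ℤ) (he : (N : ℤ) ^ 2 < e)
    (hlow : ∀ x ∈ γ.posFinset, γ.first.1 ≤ x)
    (hmem : γ.first.1 + e ∈ γ.posFinset) : γ.IsLongCorner := by
  set k := γ.first.1 with hk
  have hkmem : k ∈ γ.posFinset := aux_mem_posFinset.mpr (Or.inl rfl)
  set M := γ.posFinset.max' γ.posFinset_nonempty with hM
  have hMmem : M ∈ γ.posFinset := Finset.max'_mem _ _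
  have heM : k + e ≤ M := Finset.le_max' _ _ hmem
  have hIcc : γ.posFinset = Finset.Icc k M := by
    ext x
    constructor
    · intro hx
      exact Finset.mem_Icc.mpr ⟨hlow x hx, Finset.le_max' _ _ hx⟩
    · intro hx
      obtain ⟨h1, h2⟩ := Finset.mem_Icc.mp hx
      exact List.mem_toFinset.mpr
        (aux_list_ivt γ.posList hch x k M (aux_mem_posList_of_mem_posFinset hkmem)
          (aux_mem_posList_of_mem_posFinset hMmem) h1 h2)
  have hmin : γ.posFinset.min' γ.posFinset_nonempty = k :=
    le_antisymm (Finset.min'_le _ _ hkmem)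
      (Finset.le_min' _ _ _ fun y hy => hlow y hy)
  refine ⟨Or.inl ⟨hne, hvert, (M - k).toNat, ?_⟩, ?_⟩
  · rw [hIcc]
    congr 1
    have : k ≤ M := Finset.le_max' _ _ hkmem
    omega
  · show (N : ℤ) ^ 2 < γ.posFinset.max' _ - γ.posFinset.min' _
    rw [hmin, ← hM]
    omega

lemma aux_isLongCorner_left (γ : UPath N)
    (hch : γ.posList.Chain' (fun x y : ℤ => |y - x| ≤ 1))
    (hne : γ.steps ≠ []) (hvert : γ.last.1 = γ.first.1)
    (e : ℤ) (he : (N : ℤ) ^ 2 < e)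
    (hhigh : ∀ x ∈ γ.posFinset, x ≤ γ.first.1)
    (hmem : γ.first.1 - e ∈ γ.posFinset) : γ.IsLongCorner := by
  set k := γ.first.1 with hk
  have hkmem : k ∈ γ.posFinset := aux_mem_posFinset.mpr (Or.inl rfl)
  set m := γ.posFinset.min' γ.posFinset_nonempty with hm
  have hmmem : m ∈ γ.posFinset := Finset.min'_mem _ _
  have hem : m ≤ k - e := Finset.min'_le _ _ hmem
  have hIcc : γ.posFinset = Finset.Icc m k := by
    ext x
    constructor
    · intro hx
      exact Finset.mem_Icc.mpr ⟨Finset.min'_le _ _ hx, hhigh x hx⟩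
    · intro hx
      obtain ⟨h1, h2⟩ := Finset.mem_Icc.mp hx
      exact List.mem_toFinset.mpr
        (aux_list_ivt γ.posList hch x m k (aux_mem_posList_of_mem_posFinset hmmem)
          (aux_mem_posList_of_mem_posFinset hkmem) h1 h2)
  have hmax : γ.posFinset.max' γ.posFinset_nonempty = k :=
    le_antisymm (Finset.max'_le _ _ _ fun y hy => hhigh y hy)
      (Finset.le_max' _ _ hkmem)
  refine ⟨Or.inr ⟨hne, hvert, (k - m).toNat, ?_⟩, ?_⟩
  · rw [hIcc]
    congr 1
    have : m ≤ k := Finset.min'_le _ _ hkmem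
    omega
  · show (N : ℤ) ^ 2 < γ.posFinset.max' _ - γ.posFinset.min' _
    rw [hmax, ← hm]
    omega

lemma aux_exists_lb {R : DBC N} {ρ : UPath N} (hρ : ρ.InUnf R) :
    ∀ (n : ℕ) (θ : UPath N), θ.steps.length ≤ n → θ.IsSubpath ρ →
      θ.IsLongCorner → ∃ θ' : UPath N, θ'.IsSubpath ρ ∧ θ'.IsLBCorner := by
  intro n
  induction n with
  | zero =>
    intro θ hlen hsub hlc
    exfalso
    have hne : θ.steps ≠ [] := by
      rcases hlc.1 with h | h <;> exact h.1
    have := List.length_eq_zero_iff.mp (Nat.le_zero.mp hlen)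
    exact hne this
  | succ n ih =>
    intro θ hlen hsub hlc
    by_cases hb : θ.IsBasic
    · exact ⟨θ, hsub, hlc, hb⟩
    rw [UPath.IsBasic] at hb
    push_neg at hb
    obtain ⟨s, hsmem, hseq⟩ := hb
    have hne0 : θ.steps ≠ [] := by
      rcases hlc.1 with h | h <;> exact h.1
    obtain ⟨pre, post', hdl⟩ := List.append_of_mem hsmem
    set post := post' ++ [θ.steps.getLast hne0] with hpost
    have hsteps : θ.steps = pre ++ s :: post := by
      conv_lhs => rw [← List.dropLast_append_getLast hne0]
      rw [hdl, hpost]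
      simp
    have hvertθ : θ.last.1 = θ.first.1 := by
      rcases hlc.1 with h | h <;> exact h.2.1
    set k := θ.first.1 with hkdef
    set α : UPath N := ⟨θ.first, pre ++ [s]⟩ with hα
    set β : UPath N := ⟨s.2, post⟩ with hβ
    have hsubα : α.IsSubpath θ := by
      refine ⟨[], post, by simp [hsteps, hα], by simp [hα, UPath.last]⟩
    have hsubβ : β.IsSubpath θ := by
      refine ⟨pre ++ [s], [], by simp [hsteps, hβ], ?_⟩
      show s.2 = (UPath.mk θ.first (pre ++ [s])).last
      rw [UPath.last]
      simp
    have hlastα : α.last = s.2 := by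
      rw [UPath.last]
      simp [hα]
    have hvertα : α.last.1 = α.first.1 := by
      rw [hlastα]
      exact hseq
    have hlastβ : β.last = θ.last := by
      show (post.map Prod.snd).getLastD s.2 = θ.last
      rw [UPath.last, hsteps]
      have h2 : (pre ++ s :: post).map Prod.snd
          = (pre.map Prod.snd ++ [s.2]) ++ post.map Prod.snd := by simp
      rw [h2, aux_getLastD_append, List.getLastD_concat]
    have hvertβ : β.last.1 = β.first.1 := by
      rw [hlastβ, hvertθ]
      exact hseq.symm
    have hfirstβ : β.first.1 = k := hseq
    have hneα : α.steps ≠ [] := by simp [hα]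
    have hneβ : β.steps ≠ [] := by simp [hβ, hpost]
    have hchα : α.posList.Chain' (fun x y : ℤ => |y - x| ≤ 1) :=
      aux_chain_posList_of_subpath hρ (aux_subpath_trans hsubα hsub)
    have hchβ : β.posList.Chain' (fun x y : ℤ => |y - x| ≤ 1) :=
      aux_chain_posList_of_subpath hρ (aux_subpath_trans hsubβ hsub)
    have hlenθ : θ.steps.length = pre.length + 1 + post.length := by
      rw [hsteps]; simp; omega
    have hlenα : α.steps.length ≤ n := by
      have : 1 ≤ post.length := by
        rw [hpost]; simp
      simp only [hα]
      simp
      omega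
    have hlenβ : β.steps.length ≤ n := by
      simp only [hβ]
      omega
    have hsplit : ∀ x ∈ θ.posFinset, x ∈ α.posFinset ∨ x ∈ β.posFinset := by
      intro x hx
      rcases aux_mem_posFinset.mp hx with h | ⟨st, hst, hst2⟩
      · exact Or.inl (aux_mem_posFinset.mpr (Or.inl h))
      · rw [hsteps] at hst
        rcases List.mem_append.mp hst with h | h
        · exact Or.inl (aux_mem_posFinset.mpr
            (Or.inr ⟨st, by simp [hα]; tauto, hst2⟩))
        · rcases List.mem_cons.mp h with rfl | h
          · exact Or.inl (aux_mem_posFinset.mpr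
              (Or.inr ⟨st, by simp [hα], hst2⟩))
          · exact Or.inr (aux_mem_posFinset.mpr (Or.inr ⟨st, h, hst2⟩))
    have hsubsetα : ∀ x ∈ α.posFinset, x ∈ θ.posFinset := by
      intro x hx
      rcases aux_mem_posFinset.mp hx with h | ⟨st, hst, hst2⟩
      · exact aux_mem_posFinset.mpr (Or.inl h)
      · refine aux_mem_posFinset.mpr (Or.inr ⟨st, ?_, hst2⟩)
        rw [hsteps]
        simp only [hα] at hst
        rcases List.mem_append.mp hst with h | h
        · exact List.mem_append.mpr (Or.inl h)
        · simp at h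
          subst h
          simp
    have hsubsetβ : ∀ x ∈ β.posFinset, x ∈ θ.posFinset := by
      intro x hx
      rcases aux_mem_posFinset.mp hx with h | ⟨st, hst, hst2⟩
      · refine aux_mem_posFinset.mpr (Or.inl ?_)
        rw [h]
        exact hseq
      · refine aux_mem_posFinset.mpr (Or.inr ⟨st, ?_, hst2⟩)
        rw [hsteps]
        simp only [hβ] at hst
        simp [hst]
    rcases hlc.1 with hR | hL
    · -- right corner
      obtain ⟨_, _, d, hIcc⟩ := hR
      have hkmem : k ∈ θ.posFinset := aux_mem_posFinset.mpr (Or.inl rfl)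
      have hdmem : k + (d : ℤ) ∈ θ.posFinset := by
        rw [hIcc]
        exact Finset.mem_Icc.mpr ⟨by omega, le_refl _⟩
      have hmin : θ.posFinset.min' θ.posFinset_nonempty = k := by
        refine le_antisymm (Finset.min'_le _ _ hkmem) (Finset.le_min' _ _ _ ?_)
        intro y hy
        rw [hIcc] at hy
        exact (Finset.mem_Icc.mp hy).1
      have hmax : θ.posFinset.max' θ.posFinset_nonempty = k + (d : ℤ) := by
        refine le_antisymm (Finset.max'_le _ _ _ ?_) (Finset.le_max' _ _ hdmem)
        intro y hy
        rw [hIcc] at hy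
        exact (Finset.mem_Icc.mp hy).2
      have hd : (N : ℤ) ^ 2 < (d : ℤ) := by
        have := hlc.2
        rw [UPath.extent, hmin, hmax] at this
        omega
      have hlowα : ∀ x ∈ α.posFinset, α.first.1 ≤ x := by
        intro x hx
        have := hsubsetα x hx
        rw [hIcc] at this
        exact (Finset.mem_Icc.mp this).1
      have hlowβ : ∀ x ∈ β.posFinset, β.first.1 ≤ x := by
        intro x hx
        have := hsubsetβ x hx
        rw [hIcc] at this
        rw [hfirstβ]
        exact (Finset.mem_Icc.mp this).1
      rcases hsplit _ hdmem with hin | hin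
      · have hlcα : α.IsLongCorner :=
          aux_isLongCorner_right α hchα hneα hvertα (d : ℤ) hd hlowα hin
        exact ih α hlenα (aux_subpath_trans hsubα hsub) hlcα
      · have hlcβ : β.IsLongCorner := by
          refine aux_isLongCorner_right β hchβ hneβ hvertβ (d : ℤ) hd hlowβ ?_
          rw [hfirstβ]
          exact hin
        exact ih β hlenβ (aux_subpath_trans hsubβ hsub) hlcβ
    · -- left corner
      obtain ⟨_, _, d, hIcc⟩ := hL
      have hkmem : k ∈ θ.posFinset := aux_mem_posFinset.mpr (Or.inl rfl)
      have hdmem : k - (d : ℤ) ∈ θ.posFinset := by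
        rw [hIcc]
        exact Finset.mem_Icc.mpr ⟨le_refl _, by omega⟩
      have hmax : θ.posFinset.max' θ.posFinset_nonempty = k := by
        refine le_antisymm (Finset.max'_le _ _ _ ?_) (Finset.le_max' _ _ hkmem)
        intro y hy
        rw [hIcc] at hy
        exact (Finset.mem_Icc.mp hy).2
      have hmin : θ.posFinset.min' θ.posFinset_nonempty = k - (d : ℤ) := by
        refine le_antisymm (Finset.min'_le _ _ hdmem) (Finset.le_min' _ _ _ ?_)
        intro y hy
        rw [hIcc] at hy
        exact (Finset.mem_Icc.mp hy).1
      have hd : (N : ℤ) ^ 2 < (d : ℤ) := by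
        have := hlc.2
        rw [UPath.extent, hmin, hmax] at this
        omega
      have hhighα : ∀ x ∈ α.posFinset, x ≤ α.first.1 := by
        intro x hx
        have := hsubsetα x hx
        rw [hIcc] at this
        exact (Finset.mem_Icc.mp this).2
      have hhighβ : ∀ x ∈ β.posFinset, x ≤ β.first.1 := by
        intro x hx
        have := hsubsetβ x hx
        rw [hIcc] at this
        rw [hfirstβ]
        exact (Finset.mem_Icc.mp this).2
      rcases hsplit _ hdmem with hin | hin
      · have hlcα : α.IsLongCorner :=
          aux_isLongCorner_left α hchα hneα hvertα (d : ℤ) hd hhighα hin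
        exact ih α hlenα (aux_subpath_trans hsubα hsub) hlcα
      · have hlcβ : β.IsLongCorner := by
          refine aux_isLongCorner_left β hchβ hneβ hvertβ (d : ℤ) hd hhighβ ?_
          rw [hfirstβ]
          exact hin
        exact ih β hlenβ (aux_subpath_trans hsubβ hsub) hlcβ

end Aux

/-- A path has no lb-corner subpath iff it has no long-corner
subpath. -/
theorem statement10 (N : ℕ) (hN : 1 ≤ N) (R : DBC N) (ρ : UPath N)
    (hρ : ρ.InUnf R) :
    (∀ θ : UPath N, θ.IsSubpath ρ → ¬ θ.IsLBCorner) ↔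
      (∀ θ : UPath N, θ.IsSubpath ρ → ¬ θ.IsLongCorner) := by
  constructor
  · intro h θ hsub hlc
    obtain ⟨θ', hsub', hlb⟩ := aux_exists_lb hρ θ.steps.length θ le_rfl hsub hlc
    exact h θ' hsub' hlb
  · intro h θ hsub hlb
    exact h θ hsub hlb.1
end

section
/- Let μ be a repeating path in an unfolding of the constraint graph of a difference bounds constraint over N variables with |positions(μ)| ≤ N²+1. Then for every k ≥ 1, the k-fold concatenation μ^k contains no long-corner subpath: lcorners(μ^k) = ∅. -/
variable {N : ℕ}

/- ## Auxiliary machinery for Statement 11 -/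

namespace S11
open UPath

/-- positions move by at most 1 along an edge -/
lemma edge_pos {N : ℕ} {R : DBC N} {u v : Vtx N} {c : ℤ} (h : R.Edge u v c) :
    |v.1 - u.1| ≤ 1 := by
  obtain ⟨p, s, t, _, rfl, rfl⟩ := h
  cases s <;> cases t <;> simp [endpt, abs_le] <;> omega

lemma chain_pos {N : ℕ} {R : DBC N} : ∀ (steps : List (ℤ × Vtx N)) (u : Vtx N),
    UPath.EdgeChain R.Edge u steps →
    List.Chain' (fun a b : ℤ => |b - a| ≤ 1) (u.1 :: steps.map (fun s => s.2.1))
  | [], _, _ => List.isChain_singleton _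
  | s :: rest, u, h => by
    rw [List.map_cons, List.Chain', List.isChain_cons_cons]
    exact ⟨edge_pos h.1, chain_pos rest s.2 h.2⟩

/-- discrete intermediate value theorem for ±1 walks -/
lemma ivt : ∀ (P : List ℤ), P.Chain' (fun a b : ℤ => |b - a| ≤ 1) →
    ∀ x ∈ P, ∀ y ∈ P, ∀ v, x ≤ v → v ≤ y → v ∈ P
  | [], _, x, hx, _, _, _, _, _ => absurd hx List.not_mem_nil
  | [a], _, x, hx, y, hy, v, hxv, hvy => by
    simp only [List.mem_singleton] at hx hy ⊢
    omega
  | a :: b :: P, hch, x, hx, y, hy, v, hxv, hvy => by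
    have hab : |b - a| ≤ 1 := (List.isChain_cons_cons.mp hch).1
    have hab' := abs_le.mp hab
    have htail := (List.isChain_cons_cons.mp hch).2
    rcases List.mem_cons.mp hx with hxa | hx'
    · rcases List.mem_cons.mp hy with hya | hy'
      · have : v = a := by omega
        simp [this]
      · by_cases hva : v = a
        · simp [hva]
        · have hbv : b ≤ v := by omega
          exact List.mem_cons_of_mem _
            (ivt (b :: P) htail b (List.mem_cons_self) y hy' v hbv hvy)
    · rcases List.mem_cons.mp hy with hya | hy'
      · by_cases hva : v = a
        · simp [hva]
        · have hvb : v ≤ b := by omega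
          exact List.mem_cons_of_mem _
            (ivt (b :: P) htail x hx' b (List.mem_cons_self) v hxv hvb)
      · exact List.mem_cons_of_mem _ (ivt (b :: P) htail x hx' y hy' v hxv hvy)

/- ### getLastD helpers -/

lemma getLastD_irrel {α} (l : List α) (h : l ≠ []) (d d' : α) :
    l.getLastD d = l.getLastD d' := by
  cases l with
  | nil => exact absurd rfl h
  | cons a t => rw [List.getLastD_cons, List.getLastD_cons]

lemma getLastD_append {α} (l1 l2 : List α) (h : l2 ≠ []) (d : α) :
    (l1 ++ l2).getLastD d = l2.getLastD d := by
  induction l1 generalizing d with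
  | nil => rfl
  | cons a t ih =>
    rw [List.cons_append, List.getLastD_cons, ih a,
      getLastD_irrel l2 h a d]

lemma getLastD_map {α β} (f : α → β) : ∀ (l : List α) (d : α),
    (l.map f).getLastD (f d) = f (l.getLastD d)
  | [], _ => rfl
  | a :: t, d => by
    rw [List.map_cons, List.getLastD_cons, List.getLastD_cons, getLastD_map f t a]

lemma getLastD_mem {α} : ∀ (l : List α), l ≠ [] → ∀ d, l.getLastD d ∈ l
  | [], h, _ => absurd rfl h
  | [a], _, d => by simp [List.getLastD_cons]
  | a :: b :: t, _, d => by
    rw [List.getLastD_cons]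
    exact List.mem_cons_of_mem _ (getLastD_mem (b :: t) (by simp) a)

lemma headI_append {α} [Inhabited α] (l1 l2 : List α) (h : l1 ≠ []) :
    (l1 ++ l2).headI = l1.headI := by
  cases l1 with
  | nil => exact absurd rfl h
  | cons a t => rfl

lemma headI_map_add (c : ℤ) (Q : List ℤ) (h : Q ≠ []) :
    (Q.map (· + c)).headI = Q.headI + c := by
  cases Q with
  | nil => exact absurd rfl h
  | cons a t => rfl

lemma getLastD_map_add (c : ℤ) (Q : List ℤ) (h : Q ≠ []) :
    (Q.map (· + c)).getLastD 0 = Q.getLastD 0 + c := by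
  rw [getLastD_irrel _ (by simpa using h) 0 (0 + c)]
  exact getLastD_map (· + c) Q 0

lemma headI_map_neg (Q : List ℤ) (h : Q ≠ []) :
    (Q.map Neg.neg).headI = -Q.headI := by
  cases Q with
  | nil => exact absurd rfl h
  | cons a t => rfl

lemma getLastD_map_neg (Q : List ℤ) (h : Q ≠ []) :
    (Q.map Neg.neg).getLastD 0 = -(Q.getLastD 0) := by
  rw [getLastD_irrel _ (by simpa using h) 0 (-0)]
  exact getLastD_map Neg.neg Q 0

lemma map_eq_append_split {α β} (f : α → β) (l : List α) (l1 l2 : List β)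
    (h : l.map f = l1 ++ l2) :
    ∃ t1 t2, l = t1 ++ t2 ∧ l1 = t1.map f ∧ l2 = t2.map f := by
  refine ⟨l.take l1.length, l.drop l1.length, (List.take_append_drop _ _).symm, ?_, ?_⟩
  · rw [List.map_take, h, List.take_left]
  · rw [List.map_drop, h, List.drop_left]

/- ### The quasi-monotonicity invariant -/

structure Good (a b E : ℤ) (Q : List ℤ) : Prop where
  ne : Q ≠ []
  mono : Q.headI ≤ Q.getLastD 0
  ub : ∀ x ∈ Q, x ≤ Q.getLastD 0 + b
  lb : ∀ x ∈ Q, Q.headI - a ≤ x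
  quasi : ∀ l1 l2, Q = l1 ++ l2 → ∀ x ∈ l1, ∀ y ∈ l2, x ≤ y + E

lemma Good.shift {a b E : ℤ} {Q : List ℤ} (h : Good a b E Q) (c : ℤ) :
    Good a b E (Q.map (· + c)) := by
  have hne : Q.map (· + c) ≠ [] := by simpa using h.ne
  refine ⟨hne, ?_, ?_, ?_, ?_⟩
  · rw [headI_map_add c Q h.ne, getLastD_map_add c Q h.ne]
    linarith [h.mono]
  · intro x hx
    obtain ⟨z, hz, rfl⟩ := List.mem_map.mp hx
    rw [getLastD_map_add c Q h.ne]
    have := h.ub z hz; omega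
  · intro x hx
    obtain ⟨z, hz, rfl⟩ := List.mem_map.mp hx
    rw [headI_map_add c Q h.ne]
    have := h.lb z hz; omega
  · intro l1 l2 heq x hx y hy
    obtain ⟨t1, t2, rfl, rfl, rfl⟩ := map_eq_append_split _ Q l1 l2 heq
    obtain ⟨zx, hzx, rfl⟩ := List.mem_map.mp hx
    obtain ⟨zy, hzy, rfl⟩ := List.mem_map.mp hy
    have := h.quasi t1 t2 rfl zx hzx zy hzy; omega

lemma Good.glue {a b E : ℤ} {P Q : List ℤ} (ha : 0 ≤ a) (hb : 0 ≤ b)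
    (hab : a + b ≤ E) (hP : Good a b E P) (hQ : Good a b E Q)
    (hpq : Q.headI = P.getLastD 0) :
    Good a b E (P ++ Q.tail) := by
  obtain ⟨q, Qt, rfl⟩ := List.exists_cons_of_ne_nil hQ.ne
  show Good a b E (P ++ Qt)
  have hq : q = P.getLastD 0 := hpq
  have hGL : (P ++ Qt).getLastD 0 = (q :: Qt).getLastD 0 := by
    cases Qt with
    | nil => simpa [List.getLastD_cons] using hq.symm
    | cons t s =>
      rw [getLastD_append P (t :: s) (by simp) 0]
      conv_rhs => rw [List.getLastD_cons]
      exact getLastD_irrel (t :: s) (by simp) 0 q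
  have hH : (P ++ Qt).headI = P.headI := headI_append P Qt hP.ne
  have hQhead : (q : ℤ) ≤ (q :: Qt).getLastD 0 := hQ.mono
  refine ⟨by simp [hP.ne], ?_, ?_, ?_, ?_⟩
  · rw [hH, hGL]
    calc P.headI ≤ P.getLastD 0 := hP.mono
    _ = q := hq.symm
    _ ≤ _ := hQhead
  · intro x hx
    rw [hGL]
    rcases List.mem_append.mp hx with hx | hx
    · have := hP.ub x hx; rw [← hq] at this; omega
    · exact hQ.ub x (List.mem_cons_of_mem _ hx)
  · intro x hx
    rw [hH]
    rcases List.mem_append.mp hx with hx | hx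
    · exact hP.lb x hx
    · have h1 := hQ.lb x (List.mem_cons_of_mem _ hx)
      have h2 : (q :: Qt).headI = q := rfl
      rw [h2, hq] at h1
      have := hP.mono; omega
  · intro l1 l2 heq x hx y hy
    rcases List.append_eq_append_iff.mp heq with ⟨a', ha1, ha2⟩ | ⟨c', hc1, hc2⟩
    · rcases List.mem_append.mp (ha1 ▸ hx) with hx' | hx'
      · have h1 := hP.ub x hx'
        rw [← hq] at h1
        have h2 : (q :: Qt).headI - a ≤ y := hQ.lb y (by
          rw [ha2]; exact List.mem_cons_of_mem _ (List.mem_append_right _ hy))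
        have h3 : (q :: Qt).headI = q := rfl
        rw [h3] at h2; omega
      · exact hQ.quasi (q :: a') l2 (by rw [ha2]; rfl) x
          (List.mem_cons_of_mem _ hx') y hy
    · rcases List.mem_append.mp (hc2 ▸ hy) with hy' | hy'
      · exact hP.quasi l1 c' hc1 x hx y hy'
      · have h1 := hP.ub x (by rw [hc1]; exact List.mem_append_left _ hx)
        rw [← hq] at h1
        have h2 : (q :: Qt).headI - a ≤ y :=
          hQ.lb y (List.mem_cons_of_mem _ hy')
        have h3 : (q :: Qt).headI = q := rfl
        rw [h3] at h2; omega

lemma Good.single (a b E x : ℤ) (ha : 0 ≤ a) (hb : 0 ≤ b) : Good a b E [x] := by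
  refine ⟨by simp, le_rfl, ?_, ?_, ?_⟩
  · intro z hz; simp at hz; subst hz; simp [List.getLastD_cons]; omega
  · intro z hz; simp at hz; subst hz; simp [List.getLastD_cons]; omega
  · intro l1 l2 heq z hz y hy
    have h1 : 1 ≤ l1.length := List.length_pos_of_mem hz
    have h2 : 1 ≤ l2.length := List.length_pos_of_mem hy
    have := congrArg List.length heq
    simp at this; omega

lemma Good.pow {a b E : ℤ} (ha : 0 ≤ a) (hb : 0 ≤ b) (hab : a + b ≤ E)
    (base : List ℤ) (f : ℕ → List ℤ) (hbase : Good a b E base)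
    (h0 : f 0 = [base.headI])
    (hrec : ∀ k, ∃ c, f (k + 1) = f k ++ (base.map (· + c)).tail ∧
        base.headI + c = (f k).getLastD 0) :
    ∀ k, Good a b E (f k)
  | 0 => h0 ▸ Good.single a b E base.headI ha hb
  | k + 1 => by
    obtain ⟨c, heq, hc⟩ := hrec k
    have hk := Good.pow ha hb hab base f hbase h0 hrec k
    rw [heq]
    exact Good.glue ha hb hab hk (hbase.shift c)
      (by rw [headI_map_add c base hbase.ne, hc])

end S11

namespace S11
open UPath

variable {N : ℕ}

lemma posList_eq (ρ : UPath N) :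
    ρ.posList = ρ.first.1 :: ρ.steps.map (fun s => s.2.1) := by
  simp [UPath.posList, UPath.vertices, List.map_map, Function.comp]

lemma last_fst (ρ : UPath N) : ρ.last.1 = ρ.posList.getLastD 0 := by
  rw [posList_eq, List.getLastD_cons]
  have h : ρ.steps.map (fun s : ℤ × Vtx N => s.2.1)
      = (ρ.steps.map Prod.snd).map Prod.fst := by
    rw [List.map_map]; rfl
  rw [h, getLastD_map Prod.fst (ρ.steps.map Prod.snd) ρ.first]
  rfl

lemma posList_glue (ρ π : UPath N) :
    (ρ.glue π).posList
      = ρ.posList ++ (π.posList.map (· + (ρ.last.1 - π.first.1))).tail := by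
  simp [posList_eq, UPath.glue, UPath.append, UPath.shift, List.map_map,
    Function.comp, add_comm]

lemma posList_pow_zero (μ : UPath N) : (μ.pow 0).posList = [μ.first.1] := by
  simp [UPath.pow, posList_eq]

lemma posList_ne (ρ : UPath N) : ρ.posList ≠ [] := by
  rw [posList_eq]; simp

lemma posList_headI (ρ : UPath N) : ρ.posList.headI = ρ.first.1 := by
  rw [posList_eq]; rfl

lemma pow_rec (μ : UPath N) (k : ℕ) :
    ∃ c, (μ.pow (k + 1)).posList
        = (μ.pow k).posList ++ (μ.posList.map (· + c)).tail ∧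
      μ.posList.headI + c = (μ.pow k).posList.getLastD 0 := by
  refine ⟨(μ.pow k).last.1 - μ.first.1, ?_, ?_⟩
  · exact posList_glue (μ.pow k) μ
  · rw [posList_headI, ← last_fst]; ring

lemma quasi_fw (μ : UPath N) (m M : ℤ)
    (hbd : ∀ x ∈ μ.posList, m ≤ x ∧ x ≤ M)
    (hfl : μ.first.1 ≤ μ.last.1) :
    ∀ k l1 l2, (μ.pow k).posList = l1 ++ l2 →
      ∀ x ∈ l1, ∀ y ∈ l2, x ≤ y + (M - m) := by
  have hfm : m ≤ μ.first.1 ∧ μ.first.1 ≤ M := by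
    refine hbd _ ?_
    rw [posList_eq]; exact List.mem_cons_self
  have hlm : m ≤ μ.last.1 ∧ μ.last.1 ≤ M := by
    refine hbd _ ?_
    rw [last_fst]; exact getLastD_mem _ (posList_ne μ) 0
  have hbase : Good (μ.first.1 - m) (M - μ.last.1) (M - m) μ.posList := by
    refine ⟨posList_ne μ, ?_, ?_, ?_, ?_⟩
    · rw [posList_headI, ← last_fst]; exact hfl
    · intro x hx; rw [← last_fst]; have := (hbd x hx).2; omega
    · intro x hx; rw [posList_headI]; have := (hbd x hx).1; omega
    · intro l1 l2 heq x hx y hy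
      have h1 := (hbd x (by rw [heq]; exact List.mem_append_left _ hx)).2
      have h2 := (hbd y (by rw [heq]; exact List.mem_append_right _ hy)).1
      omega
  have key := Good.pow (by omega) (by omega) (by omega) μ.posList
    (fun k => (μ.pow k).posList) hbase
    (by rw [posList_headI]; exact posList_pow_zero μ) (pow_rec μ)
  intro k l1 l2 heq x hx y hy
  exact (key k).quasi l1 l2 heq x hx y hy

lemma quasi_bw (μ : UPath N) (m M : ℤ)
    (hbd : ∀ x ∈ μ.posList, m ≤ x ∧ x ≤ M)
    (hlf : μ.last.1 ≤ μ.first.1) :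
    ∀ k l1 l2, (μ.pow k).posList = l1 ++ l2 →
      ∀ x ∈ l1, ∀ y ∈ l2, y ≤ x + (M - m) := by
  have hfm : m ≤ μ.first.1 ∧ μ.first.1 ≤ M := by
    refine hbd _ ?_
    rw [posList_eq]; exact List.mem_cons_self
  have hlm : m ≤ μ.last.1 ∧ μ.last.1 ≤ M := by
    refine hbd _ ?_
    rw [last_fst]; exact getLastD_mem _ (posList_ne μ) 0
  set base : List ℤ := μ.posList.map Neg.neg with hbasedef
  have hbne : base ≠ [] := by simpa [hbasedef] using posList_ne μ
  have hbH : base.headI = -μ.first.1 := by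
    rw [hbasedef, headI_map_neg _ (posList_ne μ), posList_headI]
  have hbG : base.getLastD 0 = -μ.last.1 := by
    rw [hbasedef, getLastD_map_neg _ (posList_ne μ), ← last_fst]
  have hbase : Good (M - μ.first.1) (μ.last.1 - m) (M - m) base := by
    refine ⟨hbne, ?_, ?_, ?_, ?_⟩
    · rw [hbH, hbG]; omega
    · intro x hx
      obtain ⟨z, hz, rfl⟩ := List.mem_map.mp hx
      rw [hbG]; have := (hbd z hz).1; simp; omega
    · intro x hx
      obtain ⟨z, hz, rfl⟩ := List.mem_map.mp hx
      rw [hbH]; have := (hbd z hz).2; simp; omega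
    · intro l1 l2 heq x hx y hy
      obtain ⟨t1, t2, ht, rfl, rfl⟩ := map_eq_append_split _ _ l1 l2 heq
      obtain ⟨zx, hzx, rfl⟩ := List.mem_map.mp hx
      obtain ⟨zy, hzy, rfl⟩ := List.mem_map.mp hy
      have h1 := (hbd zx (by rw [ht]; exact List.mem_append_left _ hzx)).1
      have h2 := (hbd zy (by rw [ht]; exact List.mem_append_right _ hzy)).2
      simp; omega
  have hrec : ∀ k, ∃ c,
      (fun k => ((μ.pow k).posList.map Neg.neg)) (k + 1)
        = (fun k => ((μ.pow k).posList.map Neg.neg)) k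
            ++ (base.map (· + c)).tail ∧
      base.headI + c
        = ((fun k => ((μ.pow k).posList.map Neg.neg)) k).getLastD 0 := by
    intro k
    obtain ⟨c, heq, hc⟩ := pow_rec μ k
    refine ⟨-c, ?_, ?_⟩
    · show List.map Neg.neg (μ.pow (k + 1)).posList
          = List.map Neg.neg (μ.pow k).posList ++ (base.map (· + -c)).tail
      rw [heq, List.map_append]
      congr 1
      simp only [hbasedef]
      rw [← List.map_tail, ← List.map_tail, ← List.map_tail,
        List.map_map, List.map_map]
      congr 1
      funext z; simp [Function.comp]; ring
    · show base.headI + -c = (List.map Neg.neg (μ.pow k).posList).getLastD 0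
      rw [hbH, getLastD_map_neg _ (posList_ne (μ.pow k)), ← hc, posList_headI]
      ring
  have key := Good.pow (by omega) (by omega) (by omega) base
    (fun k => ((μ.pow k).posList.map Neg.neg)) hbase
    (by rw [hbH]; simp [posList_pow_zero μ]) hrec
  intro k l1 l2 heq x hx y hy
  have hsplit : (μ.pow k).posList.map Neg.neg = l1.map Neg.neg ++ l2.map Neg.neg := by
    rw [heq, List.map_append]
  have := (key k).quasi _ _ hsplit (-x) (List.mem_map_of_mem hx)
    (-y) (List.mem_map_of_mem hy)
  omega

end S11

namespace S11
open UPath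

variable {N : ℕ}

lemma subpath_split1 (ρ θ : UPath N) (pre post : List (ℤ × Vtx N))
    (hsteps : ρ.steps = pre ++ θ.steps ++ post)
    (hfirst : θ.first = (UPath.mk ρ.first pre).last) :
    ∃ l1 l2, ρ.posList = l1 ++ l2 ∧ θ.first.1 ∈ l1 ∧
      ∀ v ∈ θ.steps.map (fun s : ℤ × Vtx N => s.2.1), v ∈ l2 := by
  refine ⟨ρ.first.1 :: pre.map (fun s => s.2.1),
    θ.steps.map (fun s => s.2.1) ++ post.map (fun s => s.2.1), ?_, ?_, ?_⟩
  · rw [posList_eq, hsteps]; simp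
  · have h1 : θ.first.1 = (UPath.mk ρ.first pre).posList.getLastD 0 := by
      rw [hfirst]; exact last_fst _
    rw [posList_eq] at h1
    rw [h1]
    exact getLastD_mem _ (by simp) 0
  · intro v hv; exact List.mem_append_left _ hv

lemma subpath_split2 (ρ θ : UPath N) (pre post s1 s2 : List (ℤ × Vtx N))
    (s : ℤ × Vtx N)
    (hsteps : ρ.steps = pre ++ θ.steps ++ post)
    (hsplit : θ.steps = s1 ++ s :: s2)
    (hne : s.2.1 ≠ θ.last.1) :
    ∃ l1 l2, ρ.posList = l1 ++ l2 ∧ s.2.1 ∈ l1 ∧ θ.last.1 ∈ l2 := by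
  have hlast : θ.last = (s2.map Prod.snd).getLastD s.2 := by
    show (θ.steps.map Prod.snd).getLastD θ.first = _
    rw [hsplit, List.map_append,
      getLastD_append _ ((s :: s2).map Prod.snd) (by simp) θ.first,
      List.map_cons, List.getLastD_cons]
  cases s2 with
  | nil => exact absurd (by rw [hlast]; rfl) (fun h => hne (congrArg Prod.fst h).symm)
  | cons t s2' =>
    have hmem : θ.last ∈ (t :: s2').map Prod.snd := by
      rw [hlast]; exact getLastD_mem _ (by simp) _
    obtain ⟨z, hz, hz2⟩ := List.mem_map.mp hmem
    refine ⟨ρ.first.1 :: (pre.map (fun s => s.2.1) ++ s1.map (fun s => s.2.1)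
        ++ [s.2.1]),
      (t :: s2').map (fun s => s.2.1) ++ post.map (fun s => s.2.1), ?_, ?_, ?_⟩
    · rw [posList_eq, hsteps, hsplit]; simp
    · simp
    · have : z.2.1 = θ.last.1 := congrArg Prod.fst hz2
      rw [← this]
      exact List.mem_append_left _ (List.mem_map_of_mem hz)

lemma first_mem_posList (θ : UPath N) : θ.first.1 ∈ θ.posList := by
  rw [posList_eq]; exact List.mem_cons_self

lemma corner_data {θ : UPath N} (h : θ.IsCorner) (hl : (N : ℤ) ^ 2 < θ.extent) :
    ∃ v : ℤ, v ∈ θ.posList ∧ (N : ℤ) ^ 2 < |v - θ.first.1| ∧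
      θ.last.1 = θ.first.1 := by
  have hfinmem : θ.first.1 ∈ θ.posFinset :=
    List.mem_toFinset.mpr (first_mem_posList θ)
  rcases h with ⟨hne, hvert, d, hpos⟩ | ⟨hne, hvert, d, hpos⟩
  · have hdmem : θ.first.1 + (d : ℤ) ∈ θ.posFinset := by
      rw [hpos, Finset.mem_Icc]
      constructor <;> omega
    have hmax : θ.posFinset.max' θ.posFinset_nonempty = θ.first.1 + (d : ℤ) := by
      refine le_antisymm (Finset.max'_le _ _ _ fun x hx => ?_)
        (Finset.le_max' _ _ hdmem)
      rw [hpos, Finset.mem_Icc] at hx; exact hx.2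
    have hmin : θ.posFinset.min' θ.posFinset_nonempty = θ.first.1 := by
      refine le_antisymm (Finset.min'_le _ _ hfinmem)
        (Finset.le_min' _ _ _ fun x hx => ?_)
      rw [hpos, Finset.mem_Icc] at hx; exact hx.1
    have hext : θ.extent = (d : ℤ) := by
      unfold UPath.extent; rw [hmax, hmin]; ring
    rw [hext] at hl
    refine ⟨θ.first.1 + (d : ℤ), List.mem_toFinset.mp hdmem, ?_, hvert⟩
    have : |θ.first.1 + (d : ℤ) - θ.first.1| = (d : ℤ) := by
      rw [add_sub_cancel_left, abs_of_nonneg (by positivity)]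
    rw [this]; exact hl
  · have hdmem : θ.first.1 - (d : ℤ) ∈ θ.posFinset := by
      rw [hpos, Finset.mem_Icc]
      constructor <;> omega
    have hmin : θ.posFinset.min' θ.posFinset_nonempty = θ.first.1 - (d : ℤ) := by
      refine le_antisymm (Finset.min'_le _ _ hdmem)
        (Finset.le_min' _ _ _ fun x hx => ?_)
      rw [hpos, Finset.mem_Icc] at hx; exact hx.1
    have hmax : θ.posFinset.max' θ.posFinset_nonempty = θ.first.1 := by
      refine le_antisymm (Finset.max'_le _ _ _ fun x hx => ?_)
        (Finset.le_max' _ _ hfinmem)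
      rw [hpos, Finset.mem_Icc] at hx; exact hx.2
    have hext : θ.extent = (d : ℤ) := by
      unfold UPath.extent; rw [hmax, hmin]; ring
    rw [hext] at hl
    refine ⟨θ.first.1 - (d : ℤ), List.mem_toFinset.mp hdmem, ?_, hvert⟩
    have : |θ.first.1 - (d : ℤ) - θ.first.1| = (d : ℤ) := by
      rw [sub_sub_cancel_left, abs_neg, abs_of_nonneg (by positivity)]
    rw [this]; exact hl

end S11

/-- Powers of a repeating path visiting at most `N² + 1`
positions contain no long corner. -/
theorem statement11 (N : ℕ) (hN : 1 ≤ N) (R : DBC N) (μ : UPath N)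
    (hμ : μ.InUnf R) (hrep : μ.IsRepeating)
    (hcard : μ.posFinset.card ≤ N ^ 2 + 1) :
    ∀ k : ℕ, 1 ≤ k → ∀ θ : UPath N, θ.IsSubpath (μ.pow k) → ¬ θ.IsLongCorner := by
  intro k hk θ hsub hlc
  obtain ⟨hcorner, hlong⟩ := hlc
  obtain ⟨pre, post, hsteps, hfirst⟩ := hsub
  classical
  have hch : List.Chain' (fun a b : ℤ => |b - a| ≤ 1) μ.posList := by
    rw [S11.posList_eq]; exact S11.chain_pos μ.steps μ.first hμ
  have hFne := μ.posFinset_nonempty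
  set m := μ.posFinset.min' hFne with hm
  set M := μ.posFinset.max' hFne with hM
  have hmmem : m ∈ μ.posList := List.mem_toFinset.mp (μ.posFinset.min'_mem hFne)
  have hMmem : M ∈ μ.posList := List.mem_toFinset.mp (μ.posFinset.max'_mem hFne)
  have hbd : ∀ x ∈ μ.posList, m ≤ x ∧ x ≤ M := fun x hx =>
    ⟨Finset.min'_le _ _ (List.mem_toFinset.mpr hx),
     Finset.le_max' _ _ (List.mem_toFinset.mpr hx)⟩
  have hicc : Finset.Icc m M ⊆ μ.posFinset := by
    intro v hv
    rw [Finset.mem_Icc] at hv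
    exact List.mem_toFinset.mpr (S11.ivt μ.posList hch m hmmem M hMmem v hv.1 hv.2)
  have hE : M - m ≤ (N : ℤ) ^ 2 := by
    have hc := (Finset.card_le_card hicc).trans hcard
    rw [Int.card_Icc] at hc
    have := Int.toNat_le.mp hc
    push_cast at this
    linarith
  obtain ⟨v, hvmem, hgap, hvert⟩ := S11.corner_data hcorner hlong
  have hNsq : (0 : ℤ) ≤ (N : ℤ) ^ 2 := by positivity
  have hvne_first : v ≠ θ.first.1 := by
    intro h; rw [h] at hgap; simp at hgap; linarith
  have hvne_last : v ≠ θ.last.1 := by rw [hvert]; exact hvne_first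
  have hvsteps : v ∈ θ.steps.map (fun s : ℤ × Vtx N => s.2.1) := by
    rw [S11.posList_eq] at hvmem
    rcases List.mem_cons.mp hvmem with h | h
    · exact absurd h hvne_first
    · exact h
  obtain ⟨s, hsmem, hps⟩ := List.mem_map.mp hvsteps
  obtain ⟨s1, s2, hsplit⟩ := List.append_of_mem hsmem
  obtain ⟨l1, l2, heq1, hf1, hsub1⟩ :=
    S11.subpath_split1 (μ.pow k) θ pre post hsteps hfirst
  obtain ⟨l1', l2', heq2, hs2', hl2'⟩ :=
    S11.subpath_split2 (μ.pow k) θ pre post s1 s2 s hsteps hsplit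
      (hps ▸ hvne_last)
  rcases le_total μ.first.1 μ.last.1 with hfl | hlf
  · have q := S11.quasi_fw μ m M hbd hfl
    have i1 : v ≤ θ.last.1 + (M - m) := by
      have := q k l1' l2' heq2 s.2.1 hs2' θ.last.1 hl2'
      rw [hps] at this; exact this
    have i2 : θ.first.1 ≤ v + (M - m) :=
      q k l1 l2 heq1 θ.first.1 hf1 v (hsub1 v hvsteps)
    rw [hvert] at i1
    rcases abs_cases (v - θ.first.1) with ⟨habs, _⟩ | ⟨habs, _⟩ <;>
      rw [habs] at hgap <;> linarith
  · have q := S11.quasi_bw μ m M hbd hlf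
    have i1 : v ≤ θ.first.1 + (M - m) :=
      q k l1 l2 heq1 θ.first.1 hf1 v (hsub1 v hvsteps)
    have i2 : θ.first.1 ≤ v + (M - m) := by
      have := q k l1' l2' heq2 s.2.1 hs2' θ.last.1 hl2'
      rw [hps, hvert] at this; exact this
    rcases abs_cases (v - θ.first.1) with ⟨habs, _⟩ | ⟨habs, _⟩ <;>
      rw [habs] at hgap <;> linarith
end

section
/- Let ρ be a right corner of the form x_i^(k) →…→ x_j^(k) in an unfolding of the constraint graph of a difference bounds constraint over N variables, and let 1 ≤ d ≤ extent(ρ). Then ρ has a prefix subpath ρ' of the form x_i^(k) →…→ x_p^(k+d) for some 1 ≤ p ≤ N such that positions(ρ') = {k,…,k+d}. -/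
variable {N : ℕ}

namespace Stmt12Aux

/-- Discrete intermediate value theorem (upward). -/
lemma ivt (f : ℕ → ℤ) (n : ℕ) (hstep : ∀ t < n, f (t + 1) ≤ f t + 1)
    (c : ℤ) (h0 : f 0 ≤ c) (hn : c ≤ f n) : ∃ t ≤ n, f t = c := by
  induction n with
  | zero => exact ⟨0, le_refl _, le_antisymm h0 hn⟩
  | succ n ih =>
    by_cases h : c ≤ f n
    · obtain ⟨t, ht, hft⟩ := ih (fun t ht => hstep t (by omega)) h
      exact ⟨t, by omega, hft⟩
    · push_neg at h
      have := hstep n (by omega)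
      exact ⟨n + 1, le_refl _, by omega⟩

variable {N : ℕ}

lemma edge_pos_diff (R : DBC N) (u v : Vtx N) (c : ℤ) (h : R.Edge u v c) :
    |v.1 - u.1| ≤ 1 := by
  obtain ⟨p, s, t, _, hu, hv⟩ := h
  cases s <;> cases t <;> simp_all [endpt] <;> omega

lemma posList_cons (first : Vtx N) (s : ℤ × Vtx N) (rest : List (ℤ × Vtx N)) :
    (UPath.mk first (s :: rest)).posList = first.1 :: (UPath.mk s.2 rest).posList := by
  simp [UPath.posList, UPath.vertices]

lemma posList_length (first : Vtx N) (steps : List (ℤ × Vtx N)) :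
    (UPath.mk first steps).posList.length = steps.length + 1 := by
  simp [UPath.posList, UPath.vertices]

lemma posList_take (first : Vtx N) (steps : List (ℤ × Vtx N)) (T : ℕ) :
    (UPath.mk first (steps.take T)).posList
      = (UPath.mk first steps).posList.take (T + 1) := by
  simp [UPath.posList, UPath.vertices, List.map_take, List.take_succ_cons]

lemma last_pos (first : Vtx N) (steps : List (ℤ × Vtx N)) :
    (UPath.mk first steps).last.1
      = (UPath.mk first steps).posList.getD steps.length 0 := by
  induction steps generalizing first with
  | nil => simp [UPath.last, UPath.posList, UPath.vertices]
  | cons s rest ih =>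
    have h1 : (UPath.mk first (s :: rest)).last = (UPath.mk s.2 rest).last := by
      simp only [UPath.last, List.map_cons, List.getLastD_cons]
    rw [h1, ih s.2, posList_cons]
    simp

lemma chain_step (R : DBC N) (first : Vtx N) (steps : List (ℤ × Vtx N))
    (hc : UPath.EdgeChain R.Edge first steps) :
    ∀ t < steps.length,
      |(UPath.mk first steps).posList.getD (t + 1) 0
        - (UPath.mk first steps).posList.getD t 0| ≤ 1 := by
  induction steps generalizing first with
  | nil => intro t ht; simp at ht
  | cons s rest ih =>
    intro t ht
    obtain ⟨he, hrest⟩ := hc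
    rw [posList_cons]
    cases t with
    | zero =>
      have := edge_pos_diff R first s.2 s.1 he
      cases rest with
      | nil => simpa [UPath.posList, UPath.vertices] using this
      | cons s' rest' => simpa [UPath.posList, UPath.vertices] using this
    | succ t =>
      have := ih s.2 hrest t (by simpa using ht)
      simpa using this

end Stmt12Aux

/-- A right corner `x_i^(k) → … → x_j^(k)` has, for each
`1 ≤ d ≤ extent(ρ)`, a prefix subpath ending at position `k + d` whose positions
are exactly `{k, …, k+d}`. -/
theorem statement12 (N : ℕ) (hN : 1 ≤ N) (R : DBC N) (ρ : UPath N)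
    (hρ : ρ.InUnf R) (k : ℤ) (i j : Fin N)
    (hf : ρ.first = (k, i)) (hl : ρ.last = (k, j))
    (hrc : ρ.IsRightCorner) (d : ℤ) (hd1 : 1 ≤ d) (hde : d ≤ ρ.extent) :
    ∃ (ρ' : UPath N) (rest : List (ℤ × Vtx N)),
      ρ.steps = ρ'.steps ++ rest ∧ ρ'.first = ρ.first ∧
      ρ'.last.1 = k + d ∧ ρ'.posFinset = Finset.Icc k (k + d) := by
  classical
  obtain ⟨hne, hvert, d₀, hpos⟩ := hrc
  have hk : ρ.first.1 = k := by rw [hf]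
  rw [hk] at hpos
  obtain ⟨fst, steps⟩ := ρ
  simp only at *
  set pl : List ℤ := (UPath.mk fst steps).posList with hpl
  set f : ℕ → ℤ := fun t => pl.getD t 0 with hfdef
  have hplen : pl.length = steps.length + 1 := Stmt12Aux.posList_length fst steps
  have hf0 : f 0 = k := by
    simp [hfdef, hpl, UPath.posList, UPath.vertices, hk]
  have hposF : (UPath.mk fst steps).posFinset = pl.toFinset := rfl
  have hstep : ∀ t < steps.length, |f (t + 1) - f t| ≤ 1 :=
    Stmt12Aux.chain_step R fst steps hρ
  have hstep' : ∀ t < steps.length, f (t + 1) ≤ f t + 1 := fun t ht => by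
    have := abs_le.mp (hstep t ht); omega
  have hmem : ∀ t ≤ steps.length, f t ∈ pl := by
    intro t ht
    have h1 : t < pl.length := by omega
    rw [hfdef]
    simp only
    rw [List.getD_eq_getElem _ _ h1]
    exact List.getElem_mem h1
  have hIcc : ∀ z ∈ pl, k ≤ z ∧ z ≤ k + (d₀ : ℤ) := by
    intro z hz
    have : z ∈ (UPath.mk fst steps).posFinset := by
      rw [hposF]; exact List.mem_toFinset.mpr hz
    rw [hpos] at this
    exact Finset.mem_Icc.mp this
  -- extent ≤ d₀
  have hext : (UPath.mk fst steps).extent ≤ (d₀ : ℤ) := by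
    have hmax : (UPath.mk fst steps).posFinset.max' (UPath.mk fst steps).posFinset_nonempty
        ≤ k + (d₀ : ℤ) := by
      apply Finset.max'_le
      intro y hy; rw [hpos] at hy; exact (Finset.mem_Icc.mp hy).2
    have hmin : k ≤ (UPath.mk fst steps).posFinset.min' (UPath.mk fst steps).posFinset_nonempty := by
      apply Finset.le_min'
      intro y hy; rw [hpos] at hy; exact (Finset.mem_Icc.mp hy).1
    have : (UPath.mk fst steps).extent
        = (UPath.mk fst steps).posFinset.max' (UPath.mk fst steps).posFinset_nonempty
          - (UPath.mk fst steps).posFinset.min' (UPath.mk fst steps).posFinset_nonempty := rfl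
    omega
  have hdd : d ≤ (d₀ : ℤ) := le_trans hde hext
  -- k + d is a position
  have hkd : (k + d) ∈ pl := by
    have : (k + d) ∈ (UPath.mk fst steps).posFinset := by
      rw [hpos, Finset.mem_Icc]; omega
    rw [hposF, List.mem_toFinset] at this; exact this
  have hex : ∃ t, f t = k + d ∧ t ≤ steps.length := by
    obtain ⟨n, hn, hval⟩ := List.mem_iff_getElem.mp hkd
    refine ⟨n, ?_, by omega⟩
    rw [hfdef]; simp only; rw [List.getD_eq_getElem _ _ hn]; exact hval
  obtain ⟨T, ⟨hT, hTlen⟩, hTmin⟩ :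
      ∃ T, (f T = k + d ∧ T ≤ steps.length) ∧
        ∀ u < T, ¬(f u = k + d ∧ u ≤ steps.length) :=
    ⟨Nat.find hex, Nat.find_spec hex, fun u hu => Nat.find_min hex hu⟩
  -- strict bound before T
  have hlt : ∀ u < T, f u < k + d := by
    intro u hu
    by_contra hcon
    push_neg at hcon
    have hune : f u ≠ k + d := by
      intro heq
      exact hTmin u hu ⟨heq, by omega⟩
    have hgt : k + d < f u := lt_of_le_of_ne hcon (Ne.symm hune)
    obtain ⟨t, htu, hft⟩ := Stmt12Aux.ivt f u
      (fun t ht => hstep' t (by omega))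
      (k + d) (by omega) (by omega)
    exact hTmin t (by omega) ⟨hft, by omega⟩
  refine ⟨⟨fst, steps.take T⟩, steps.drop T, (List.take_append_drop T steps).symm, rfl, ?_, ?_⟩
  · -- last position is k + d
    have hTlen' : (steps.take T).length = T := by rw [List.length_take]; omega
    have h1 := Stmt12Aux.last_pos fst (steps.take T)
    rw [hTlen', Stmt12Aux.posList_take] at h1
    rw [h1]
    have h2 : T < (pl.take (T + 1)).length := by
      rw [List.length_take]; omega
    rw [List.getD_eq_getElem _ _ h2, List.getElem_take]
    have h3 : T < pl.length := by omega
    rw [← List.getD_eq_getElem pl 0 h3]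
    exact hT
  · -- positions are exactly Icc k (k+d)
    ext z
    have hpf : (UPath.mk fst (steps.take T)).posFinset
        = (pl.take (T + 1)).toFinset := by
      rw [UPath.posFinset, Stmt12Aux.posList_take]
    rw [hpf, List.mem_toFinset, Finset.mem_Icc]
    constructor
    · intro hz
      obtain ⟨n, hn, hval⟩ := List.mem_iff_getElem.mp hz
      rw [List.length_take] at hn
      have hn' : n < pl.length := by omega
      have hfz : f n = z := by
        rw [hfdef]; simp only
        rw [List.getD_eq_getElem _ _ hn']
        rw [List.getElem_take] at hval
        exact hval
      rcases lt_or_ge n T with h | h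
      · have h1 := hlt n h
        have h2 := hIcc (f n) (hmem n (by omega))
        omega
      · have hnT : n = T := by omega
        have h2 := hIcc (f n) (hmem n (by omega))
        rw [hfz] at h2
        rw [hnT, hT] at hfz
        omega
    · rintro ⟨h1, h2⟩
      obtain ⟨t, htT, hft⟩ := Stmt12Aux.ivt f T
        (fun t ht => hstep' t (by omega))
        z (by omega) (by omega)
      rw [List.mem_iff_getElem]
      have hlen' : (pl.take (T + 1)).length = T + 1 := by
        rw [List.length_take]; omega
      refine ⟨t, by omega, ?_⟩
      rw [List.getElem_take]
      have h3 : t < pl.length := by omega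
      rw [← List.getD_eq_getElem pl 0 h3]
      exact hft
end
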